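/- arXiv:2204.04414 — 16 statements merged into one kernel-verified Lean document; each statement's English description precedes it below -/
import Mathlib

section
/- Let E and F be normed spaces over 𝕂 (ℝ or ℂ), T : E → F a linear map (not necessarily continuous), and β > 0. Then ‖Tx‖ ≥ β‖x‖ for all x ∈ E if and only if for every continuous linear functional x* on E there exists a continuous linear functional y* on F such that x* = y* ∘ T and ‖y*‖ ≤ ‖x*‖/β. -/
/-- Theorem 1.2 (operator version of the Representation Theorem of Lions):
for a linear (not necessarily continuous) map `T : E → F` between normed
spaces and `β > 0`, one has `‖Tx‖ ≥ β‖x‖` for all `x` iff every continuous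
linear functional on `E` factors through `T` by a continuous linear
functional on `F` of norm at most `‖x*‖/β`. -/
theorem stmt0 {𝕜 E F : Type*} [RCLike 𝕜]
    [NormedAddCommGroup E] [NormedSpace 𝕜 E]
    [NormedAddCommGroup F] [NormedSpace 𝕜 F]
    (T : E →ₗ[𝕜] F) (β : ℝ) (hβ : 0 < β) :
    (∀ x : E, β * ‖x‖ ≤ ‖T x‖) ↔
      ∀ xstar : E →L[𝕜] 𝕜, ∃ ystar : F →L[𝕜] 𝕜,
        (∀ x : E, xstar x = ystar (T x)) ∧ ‖ystar‖ ≤ ‖xstar‖ / β := by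
  constructor
  · intro hb xstar
    have hinj : Function.Injective T := by
      intro a b hab
      have h := hb (a - b)
      rw [map_sub, hab, sub_self, norm_zero] at h
      have h0 : ‖a - b‖ = 0 := by nlinarith [norm_nonneg (a - b)]
      exact sub_eq_zero.mp (norm_eq_zero.mp h0)
    set e := LinearEquiv.ofInjective T hinj with he
    set φ₀ : (LinearMap.range T) →ₗ[𝕜] 𝕜 := xstar.toLinearMap ∘ₗ (e.symm : LinearMap.range T →ₗ[𝕜] E)
    have hbound : ∀ y : LinearMap.range T, ‖φ₀ y‖ ≤ (‖xstar‖ / β) * ‖y‖ := by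
      intro y
      set x := e.symm y with hx
      have hxy : T x = (y : F) := by
        rw [← LinearEquiv.ofInjective_apply T x (h := hinj)]
        exact congrArg Subtype.val (e.apply_symm_apply y)
      have h1 : ‖φ₀ y‖ = ‖xstar x‖ := rfl
      have h2 : ‖xstar x‖ ≤ ‖xstar‖ * ‖x‖ := xstar.le_opNorm x
      have h3 : β * ‖x‖ ≤ ‖(y : F)‖ := by rw [← hxy]; exact hb x
      have h4 : ‖x‖ ≤ ‖(y : F)‖ / β := by
        rw [le_div_iff₀ hβ]; linarith [h3]
      calc ‖φ₀ y‖ = ‖xstar x‖ := h1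
        _ ≤ ‖xstar‖ * ‖x‖ := h2
        _ ≤ ‖xstar‖ * (‖(y : F)‖ / β) := by
            exact mul_le_mul_of_nonneg_left h4 (norm_nonneg _)
        _ = (‖xstar‖ / β) * ‖y‖ := by
            rw [div_mul_eq_mul_div, mul_div_assoc]; rfl
    set φ : (LinearMap.range T) →L[𝕜] 𝕜 := φ₀.mkContinuous (‖xstar‖ / β) hbound
    obtain ⟨g, hg, hgnorm⟩ := exists_extension_norm_eq (LinearMap.range T) φ
    refine ⟨g, ?_, ?_⟩
    · intro x
      have : g (T x) = φ ⟨T x, LinearMap.mem_range_self T x⟩ := hg ⟨T x, LinearMap.mem_range_self T x⟩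
      rw [this]
      show xstar x = xstar (e.symm ⟨T x, _⟩)
      congr 1
      have hex : e x = ⟨T x, LinearMap.mem_range_self T x⟩ :=
        Subtype.ext (LinearEquiv.ofInjective_apply T x)
      rw [← hex, e.symm_apply_apply]
    · rw [hgnorm]
      exact φ₀.mkContinuous_norm_le (by positivity) hbound
  · intro h x
    obtain ⟨xstar, hnorm, hx⟩ := exists_dual_vector'' 𝕜 x
    obtain ⟨ystar, hfac, hyn⟩ := h xstar
    have h1 : ‖x‖ = ‖xstar x‖ := by rw [hx, norm_algebraMap']; simp
    have h2 : ‖xstar x‖ ≤ ‖ystar‖ * ‖T x‖ := by rw [hfac]; exact ystar.le_opNorm _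
    have h3 : ‖ystar‖ ≤ 1 / β := le_trans hyn (by gcongr)
    have h4 : ‖x‖ ≤ (1 / β) * ‖T x‖ :=
      h1.trans_le (h2.trans (mul_le_mul_of_nonneg_right h3 (norm_nonneg _)))
    calc β * ‖x‖ ≤ β * ((1 / β) * ‖T x‖) := mul_le_mul_of_nonneg_left h4 hβ.le
      _ = ‖T x‖ := by field_simp
end

section
/- Let X be a reflexive Banach space and Y a normed space over ℂ. Let a : X × Y → ℂ be sesquilinear such that for each y ∈ Y the map x ↦ a(x,y) is continuous on X. Let β > 0. Then the following are equivalent: (i) sup over x with ‖x‖ ≤ 1 of |a(x,y)| ≥ β‖y‖ for all y ∈ Y; (ii) for every continuous antilinear functional L on Y there exists x_L ∈ X with ‖x_L‖ ≤ ‖L‖/β and L(y) = a(x_L, y) for all y ∈ Y. -/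
open scoped ComplexConjugate

set_option maxHeartbeats 2000000 in
set_option synthInstance.maxHeartbeats 1000000 in
private lemma lions_extend {X : Type*} [NormedAddCommGroup X] [NormedSpace ℂ X]
    (p : Submodule ℂ (X →L[ℂ] ℂ))
    (ℓ : p →ₗ[ℂ] ℂ) (C : ℝ) (hC : 0 ≤ C)
    (hbound : ∀ m : p, ‖ℓ m‖ ≤ C * ‖m‖) :
    ∃ g : (X →L[ℂ] ℂ) →L[ℂ] ℂ, ‖g‖ ≤ C ∧ ∀ m : p, g m = ℓ m := by
  set f : p →L[ℂ] ℂ := ⟨ℓ, AddMonoidHomClass.continuous_of_bound ℓ C hbound⟩ with hf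
  obtain ⟨g, hg, hgnorm⟩ := exists_extension_norm_eq p f
  refine ⟨g, ?_, fun m => hg m⟩
  exact hgnorm.le.trans (ContinuousLinearMap.opNorm_le_bound _ hC fun m => hbound m)

set_option maxHeartbeats 2000000 in
set_option synthInstance.maxHeartbeats 1000000 in
private lemma lions_aux {X Y : Type*}
    [NormedAddCommGroup X] [NormedSpace ℂ X]
    [NormedAddCommGroup Y] [NormedSpace ℂ Y]
    (hrefl : Function.Surjective (NormedSpace.inclusionInDoubleDual ℂ X))
    (A : Y →ₛₗ[starRingEnd ℂ] (X →L[ℂ] ℂ)) (β : ℝ) (hβ : 0 < β)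
    (hkey : ∀ y : Y, β * ‖y‖ ≤ ‖A y‖) (L : Y →SL[starRingEnd ℂ] ℂ) :
    ∃ x : X, ‖x‖ ≤ ‖L‖ / β ∧ ∀ y : Y, L y = A y x := by
  have hinj : Function.Injective A := by
    intro y₁ y₂ hy
    have h0 : A (y₁ - y₂) = 0 := by rw [map_sub, hy, sub_self]
    have h1 := hkey (y₁ - y₂)
    rw [h0, norm_zero] at h1
    have h2 : ‖y₁ - y₂‖ ≤ 0 := by nlinarith [norm_nonneg (y₁ - y₂)]
    have h3 : y₁ - y₂ = 0 := norm_le_zero_iff.mp h2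
    exact sub_eq_zero.mp h3
  set e : Y ≃ₛₗ[starRingEnd ℂ] LinearMap.range A := LinearEquiv.ofInjective A hinj with he
  set ℓ : LinearMap.range A →ₗ[ℂ] ℂ :=
    (L.toLinearMap.comp e.symm.toLinearMap : LinearMap.range A →ₗ[ℂ] ℂ) with hℓ
  have hcoe : ∀ m : LinearMap.range A, (m : X →L[ℂ] ℂ) = A (e.symm m) := by
    intro m
    have h : e (e.symm m) = m := e.apply_symm_apply m
    conv_lhs => rw [← h]
    rfl
  have hbound : ∀ m : LinearMap.range A, ‖ℓ m‖ ≤ (‖L‖ / β) * ‖m‖ := by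
    intro m
    have h1' : ‖ℓ m‖ = ‖L (e.symm m)‖ := rfl
    have h2' : β * ‖e.symm m‖ ≤ ‖m‖ := by
      have h := hkey (e.symm m)
      rwa [← hcoe m] at h
    calc ‖ℓ m‖ = ‖L (e.symm m)‖ := h1'
      _ ≤ ‖L‖ * ‖e.symm m‖ := L.le_opNorm _
      _ ≤ ‖L‖ * (‖m‖ / β) := by
          apply mul_le_mul_of_nonneg_left _ (norm_nonneg L)
          rw [le_div_iff₀ hβ]
          linarith [h2']
      _ = (‖L‖ / β) * ‖m‖ := by ring
  obtain ⟨g, hgnorm, hg⟩ :=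
    lions_extend (LinearMap.range A) ℓ (‖L‖ / β) (by positivity) hbound
  obtain ⟨x, hx⟩ := hrefl g
  have hxnorm : ‖x‖ = ‖g‖ := by
    rw [← hx]
    exact ((NormedSpace.inclusionInDoubleDualLi ℂ).norm_map x).symm
  refine ⟨x, ?_, ?_⟩
  · rw [hxnorm]
    exact hgnorm
  · intro y
    have hmem : A y ∈ LinearMap.range A := LinearMap.mem_range_self A y
    have h1' : g (A y) = ℓ ⟨A y, hmem⟩ := hg ⟨A y, hmem⟩
    have h2' : (⟨A y, hmem⟩ : LinearMap.range A) = e y := rfl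
    have h3' : ℓ ⟨A y, hmem⟩ = L y := by
      rw [h2']
      show L (e.symm (e y)) = L y
      rw [e.symm_apply_apply]
    have h4' : g (A y) = A y x := by
      rw [← hx, NormedSpace.dual_def]
    rw [← h4', h1', h3']

set_option maxHeartbeats 4000000 in
set_option synthInstance.maxHeartbeats 1000000 in
/-- Representation Theorem of Lions, complex version. `X` is a reflexive
complex Banach space (reflexivity expressed as surjectivity of the canonical
inclusion into the double dual), `Y` a complex normed space, and
`a : X × Y → ℂ` is sesquilinear (linear in `x`, antilinear in `y`) and
continuous in `x` for each fixed `y`. -/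
theorem stmt1 {X Y : Type*}
    [NormedAddCommGroup X] [NormedSpace ℂ X] [CompleteSpace X]
    [NormedAddCommGroup Y] [NormedSpace ℂ Y]
    (hrefl : Function.Surjective (NormedSpace.inclusionInDoubleDual ℂ X))
    (a : X →ₗ[ℂ] (Y →ₛₗ[starRingEnd ℂ] ℂ))
    (hacont : ∀ y : Y, Continuous fun x : X => a x y)
    (β : ℝ) (hβ : 0 < β) :
    (∀ y : Y, β * ‖y‖ ≤ ⨆ x : {x : X // ‖x‖ ≤ 1}, ‖a x.1 y‖) ↔
      ∀ L : Y →SL[starRingEnd ℂ] ℂ, ∃ xL : X,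
        ‖xL‖ ≤ ‖L‖ / β ∧ ∀ y : Y, L y = a xL y := by
  haveI : Nonempty {x : X // ‖x‖ ≤ 1} := ⟨⟨0, by simp⟩⟩
  set A : Y →ₛₗ[starRingEnd ℂ] (X →L[ℂ] ℂ) :=
    { toFun := fun y =>
        { toLinearMap :=
            { toFun := fun x => a x y
              map_add' := fun x₁ x₂ => by simp
              map_smul' := fun c x => by simp }
          cont := hacont y }
      map_add' := fun y₁ y₂ => by ext x; simp
      map_smul' := fun c y => by ext x; simp } with hA
  have hAapp : ∀ (y : Y) (x : X), A y x = a x y := fun y x => rfl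
  have hbdd : ∀ y : Y, BddAbove (Set.range fun x : {x : X // ‖x‖ ≤ 1} => ‖a x.1 y‖) := by
    intro y
    refine ⟨‖A y‖, ?_⟩
    rintro r ⟨x, rfl⟩
    exact (A y).unit_le_opNorm x.1 x.2
  constructor
  · intro h1 L
    have hkey : ∀ y : Y, β * ‖y‖ ≤ ‖A y‖ := by
      intro y
      exact le_trans (h1 y) (ciSup_le fun x => (A y).unit_le_opNorm x.1 x.2)
    obtain ⟨x, hx1, hx2⟩ := lions_aux hrefl A β hβ hkey L
    exact ⟨x, hx1, fun y => (hx2 y).trans (hAapp y x)⟩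
  · intro h2 y
    rcases eq_or_ne y 0 with rfl | hy
    · simp
    · obtain ⟨g, hg1, hgy⟩ := exists_dual_vector ℂ y (norm_ne_zero_iff.mpr hy)
      set L : Y →SL[starRingEnd ℂ] ℂ :=
        { toLinearMap :=
            { toFun := fun z => conj (g z)
              map_add' := fun z₁ z₂ => by simp
              map_smul' := fun c z => by simp }
          cont := Complex.continuous_conj.comp g.continuous } with hL
      have hLy : L y = (‖y‖ : ℂ) := by
        show conj (g y) = (‖y‖ : ℂ)
        rw [hgy]
        exact RCLike.conj_ofReal ‖y‖
      have hLnorm : ‖L‖ ≤ 1 := by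
        apply ContinuousLinearMap.opNorm_le_bound _ zero_le_one
        intro z
        show ‖conj (g z)‖ ≤ 1 * ‖z‖
        rw [RCLike.norm_conj, one_mul]
        calc ‖g z‖ ≤ ‖g‖ * ‖z‖ := g.le_opNorm z
          _ = ‖z‖ := by rw [hg1, one_mul]
      obtain ⟨x, hx, hax⟩ := h2 L
      have hx1 : ‖(β : ℂ) • x‖ ≤ 1 := by
        rw [norm_smul, Complex.norm_real, Real.norm_eq_abs, abs_of_pos hβ]
        calc β * ‖x‖ ≤ β * (‖L‖ / β) :=
              mul_le_mul_of_nonneg_left hx (le_of_lt hβ)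
          _ = ‖L‖ := by field_simp
          _ ≤ 1 := hLnorm
      have hval : ‖a ((β : ℂ) • x) y‖ = β * ‖y‖ := by
        have hsm : a ((β : ℂ) • x) y = (β : ℂ) * a x y := by
          rw [map_smul]; rfl
        rw [hsm, norm_mul, Complex.norm_real, Real.norm_eq_abs, abs_of_pos hβ,
          ← hax, hLy, Complex.norm_real, Real.norm_eq_abs, abs_of_nonneg (norm_nonneg y)]
      calc β * ‖y‖ = ‖a ((β : ℂ) • x) y‖ := hval.symm
        _ ≤ ⨆ x : {x : X // ‖x‖ ≤ 1}, ‖a x.1 y‖ :=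
            le_ciSup (hbdd y) (⟨(β : ℂ) • x, hx1⟩ : {x : X // ‖x‖ ≤ 1})
end

section
/- Let X be a reflexive Banach space and Y a normed space continuously embedded in X. Let β > 0 and let a be a sesquilinear form on X × Y such that |a(y,y)| ≥ β‖y‖_Y² for all y ∈ Y and such that x ↦ a(x,y) is continuous on X for each y ∈ Y. Then for every continuous antilinear functional L on Y there exists x_L ∈ X with a(x_L, y) = L(y) for all y ∈ Y. -/
set_option maxHeartbeats 1000000 in
set_option synthInstance.maxHeartbeats 200000 in
/-- Corollary 2.3: RTL for a form which is coercive on the diagonal of a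
normed space `Y` continuously embedded (via `J`) in a reflexive Banach
space `X`. -/
theorem stmt2 {𝕜 X Y : Type*} [RCLike 𝕜]
    [NormedAddCommGroup X] [NormedSpace 𝕜 X] [CompleteSpace X]
    [NormedAddCommGroup Y] [NormedSpace 𝕜 Y]
    (hrefl : Function.Surjective (NormedSpace.inclusionInDoubleDual 𝕜 X))
    (J : Y →L[𝕜] X) (hJ : Function.Injective J)
    (a : X →ₗ[𝕜] (Y →ₛₗ[starRingEnd 𝕜] 𝕜))
    (hacont : ∀ y : Y, Continuous fun x : X => a x y)
    (β : ℝ) (hβ : 0 < β)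
    (hcoer : ∀ y : Y, β * ‖y‖ ^ 2 ≤ ‖a (J y) y‖) :
    ∀ L : Y →SL[starRingEnd 𝕜] 𝕜, ∃ xL : X, ∀ y : Y, a xL y = L y := by
  intro L
  classical
  -- the conjugate-linear map sending `y` to the functional `a (·, y)`
  let F : Y →ₛₗ[starRingEnd 𝕜] (X →L[𝕜] 𝕜) :=
    { toFun := fun y =>
        { toLinearMap :=
            { toFun := fun x => a x y
              map_add' := fun x₁ x₂ => by simp
              map_smul' := fun c x => by simp }
          cont := hacont y }
      map_add' := fun y₁ y₂ => by ext x; simp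
      map_smul' := fun c y => by ext x; simp }
  have hFapp : ∀ (y : Y) (x : X), F y x = a x y := fun _ _ => rfl
  -- norm lower bound
  have hFnorm : ∀ y : Y, β * ‖y‖ ≤ ‖J‖ * ‖F y‖ := by
    intro y
    rcases eq_or_ne y 0 with h | h
    · simp [h]
    · have hy : (0:ℝ) < ‖y‖ := norm_pos_iff.mpr h
      have h1 : β * ‖y‖ ^ 2 ≤ ‖F y (J y)‖ := hcoer y
      have h2 : ‖F y (J y)‖ ≤ ‖F y‖ * ‖J y‖ := (F y).le_opNorm _
      have h3 : ‖J y‖ ≤ ‖J‖ * ‖y‖ := J.le_opNorm y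
      have h4 : β * ‖y‖ * ‖y‖ ≤ (‖J‖ * ‖F y‖) * ‖y‖ := by
        calc β * ‖y‖ * ‖y‖ = β * ‖y‖ ^ 2 := by ring
        _ ≤ ‖F y‖ * ‖J y‖ := h1.trans h2
        _ ≤ ‖F y‖ * (‖J‖ * ‖y‖) := by
            exact mul_le_mul_of_nonneg_left h3 (norm_nonneg _)
        _ = (‖J‖ * ‖F y‖) * ‖y‖ := by ring
      exact le_of_mul_le_mul_right h4 hy
  have hFinj : Function.Injective F := by
    intro y₁ y₂ h
    have h0 : F (y₁ - y₂) = 0 := by rw [map_sub, h, sub_self]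
    have := hFnorm (y₁ - y₂)
    rw [h0, norm_zero, mul_zero] at this
    have : ‖y₁ - y₂‖ ≤ 0 := by nlinarith
    have : y₁ - y₂ = 0 := by
      rw [← norm_le_zero_iff]; exact this
    exact sub_eq_zero.mp this
  haveI : RingHomSurjective (starRingEnd 𝕜) := ⟨fun x => ⟨star x, by simp⟩⟩
  set W : Submodule 𝕜 (X →L[𝕜] 𝕜) := LinearMap.range F with hW
  let e : Y ≃ₛₗ[starRingEnd 𝕜] W := LinearEquiv.ofInjective F hFinj
  have hecoe : ∀ y : Y, (e y : X →L[𝕜] 𝕜) = F y := fun y => rfl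
  -- the linear functional on W
  let Φlin : W →ₗ[𝕜] 𝕜 :=
    { toFun := fun w => L (e.symm w)
      map_add' := fun w₁ w₂ => by
        show L (e.symm (w₁ + w₂)) = L (e.symm w₁) + L (e.symm w₂)
        rw [LinearEquiv.map_add, map_add]
      map_smul' := fun c w => by
        show L (e.symm (c • w)) = c • L (e.symm w)
        rw [LinearEquiv.map_smulₛₗ, L.map_smulₛₗ, RCLike.conj_conj] }
  have hΦbound : ∀ w : W, ‖Φlin w‖ ≤ (‖L‖ * (‖J‖ / β)) * ‖w‖ := by
    intro w
    set y := e.symm w with hy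
    have hFy : F y = (w : X →L[𝕜] 𝕜) := by
      have := hecoe y
      rw [hy, e.apply_symm_apply] at this
      exact this.symm
    have hnw : ‖F y‖ = ‖w‖ := by rw [hFy]; rfl
    have h1 : β * ‖y‖ ≤ ‖J‖ * ‖w‖ := by
      have := hFnorm y; rwa [hnw] at this
    have h2 : ‖y‖ ≤ ‖J‖ * ‖w‖ / β := by
      rw [le_div_iff₀ hβ]; linarith
    have h3 : ‖L y‖ ≤ ‖L‖ * ‖y‖ := L.le_opNorm y
    calc ‖Φlin w‖ = ‖L y‖ := rfl
      _ ≤ ‖L‖ * ‖y‖ := h3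
      _ ≤ ‖L‖ * (‖J‖ * ‖w‖ / β) := by
          exact mul_le_mul_of_nonneg_left h2 (norm_nonneg _)
      _ = (‖L‖ * (‖J‖ / β)) * ‖w‖ := by ring
  have Φcont : Continuous Φlin := AddMonoidHomClass.continuous_of_bound Φlin (‖L‖ * (‖J‖ / β)) hΦbound
  let Φ : W →L[𝕜] 𝕜 := ⟨Φlin, Φcont⟩
  obtain ⟨g, hg, -⟩ := exists_extension_norm_eq W Φ
  obtain ⟨x, hx⟩ := hrefl g
  refine ⟨x, fun y => ?_⟩
  have hmem : F y ∈ W := ⟨y, rfl⟩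
  have h1 : g (F y) = Φ ⟨F y, hmem⟩ := hg ⟨F y, hmem⟩
  have h2 : Φ (⟨F y, hmem⟩ : W) = L y := by
    have hey : e y = ⟨F y, hmem⟩ := Subtype.ext (hecoe y)
    show L (e.symm ⟨F y, hmem⟩) = L y
    rw [← hey, e.symm_apply_apply]
  have h3 : a x y = g (F y) := by
    have := congrArg (fun h => h (F y)) hx
    simpa [NormedSpace.dual_def, hFapp] using this
  rw [h3, h1, h2]
end

section
/- Let B be a densely defined linear operator on a Banach space X. Then B is dissipative (i.e. ‖x − tBx‖ ≥ ‖x‖ for all x ∈ dom(B) and all t > 0) if and only if for all t > 0 and all y* ∈ X* there exists x* ∈ dom(B*) such that x* − t B* x* = y* and ‖x*‖ ≤ ‖y*‖. -/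
/-- Theorem 2.5: dual characterization of dissipativity. `B` is a densely
defined operator on a Banach space `X`, with domain the submodule `D`.
`B` is dissipative iff for every `t > 0` and every `y* ∈ X*` there is
`x* ∈ dom(B*)` (witnessed by `z* = B* x*`, i.e. `x*(Bx) = z*(x)` on `D`)
with `x* - t B* x* = y*` and `‖x*‖ ≤ ‖y*‖`. -/
theorem stmt3 {𝕜 X : Type*} [RCLike 𝕜]
    [NormedAddCommGroup X] [NormedSpace 𝕜 X] [CompleteSpace X]
    (D : Submodule 𝕜 X) (hD : Dense (D : Set X)) (B : D →ₗ[𝕜] X) :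
    (∀ x : D, ∀ t : ℝ, 0 < t → ‖(x : X)‖ ≤ ‖(x : X) - (t : 𝕜) • B x‖) ↔
      ∀ t : ℝ, 0 < t → ∀ ystar : X →L[𝕜] 𝕜, ∃ xstar zstar : X →L[𝕜] 𝕜,
        (∀ x : D, xstar (B x) = zstar (x : X)) ∧
        xstar - (t : 𝕜) • zstar = ystar ∧ ‖xstar‖ ≤ ‖ystar‖ := by
  constructor
  · intro hdis t ht ystar
    have ht' : (t : 𝕜) ≠ 0 := RCLike.ofReal_ne_zero.mpr ht.ne'
    set S : D →ₗ[𝕜] X := D.subtype - (t : 𝕜) • B with hSdef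
    have hSx : ∀ x : D, S x = (x : X) - (t : 𝕜) • B x := fun x => rfl
    have hbound : ∀ x : D, ‖(x : X)‖ ≤ ‖S x‖ := fun x => by
      rw [hSx]; exact hdis x t ht
    have hinj : Function.Injective S := by
      intro a b hab
      have h1 : ‖((a - b : D) : X)‖ ≤ ‖S (a - b)‖ := hbound _
      rw [map_sub, hab, sub_self, norm_zero] at h1
      have h2 : ((a - b : D) : X) = 0 := norm_le_zero_iff.mp h1
      have h3 : (a - b : D) = 0 := by exact_mod_cast h2
      exact sub_eq_zero.mp h3
    let e : D ≃ₗ[𝕜] LinearMap.range S := LinearEquiv.ofInjective S hinj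
    have he : ∀ x : D, ((e x : X)) = S x := fun x => rfl
    let f : LinearMap.range S →ₗ[𝕜] 𝕜 :=
      (ystar : X →ₗ[𝕜] 𝕜) ∘ₗ D.subtype ∘ₗ (e.symm : LinearMap.range S →ₗ[𝕜] D)
    have hf : ∀ r : LinearMap.range S, f r = ystar (e.symm r : X) := fun r => rfl
    have hfb : ∀ r : LinearMap.range S, ‖f r‖ ≤ ‖ystar‖ * ‖r‖ := by
      intro r
      rw [hf]
      calc ‖ystar (e.symm r : X)‖ ≤ ‖ystar‖ * ‖(e.symm r : X)‖ := ystar.le_opNorm _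
        _ ≤ ‖ystar‖ * ‖S (e.symm r)‖ :=
            mul_le_mul_of_nonneg_left (hbound _) (norm_nonneg _)
        _ = ‖ystar‖ * ‖r‖ := by rw [← he, e.apply_symm_apply]; rfl
    let F : LinearMap.range S →L[𝕜] 𝕜 := f.mkContinuous ‖ystar‖ hfb
    obtain ⟨g, hg, hgnorm⟩ := exists_extension_norm_eq (LinearMap.range S) F
    have hgS : ∀ x : D, g (S x) = ystar x := by
      intro x
      have hm : S x ∈ LinearMap.range S := LinearMap.mem_range_self S x
      have : g (⟨S x, hm⟩ : LinearMap.range S) = F ⟨S x, hm⟩ := hg _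
      rw [this]
      have hex : e x = ⟨S x, hm⟩ := Subtype.ext (he x)
      show f ⟨S x, hm⟩ = ystar x
      rw [hf, ← hex, e.symm_apply_apply]
    refine ⟨g, (t : 𝕜)⁻¹ • (g - ystar), ?_, ?_, ?_⟩
    · intro x
      have h1 := hgS x
      rw [hSx, map_sub, map_smul, smul_eq_mul] at h1
      show g (B x) = ((t : 𝕜)⁻¹ • (g - ystar)) x
      simp only [ContinuousLinearMap.smul_apply, ContinuousLinearMap.sub_apply,
        ContinuousLinearMap.coe_sub', Pi.sub_apply, smul_eq_mul]
      rw [eq_inv_mul_iff_mul_eq₀ ht']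
      linear_combination -h1
    · rw [smul_smul, mul_inv_cancel₀ ht', one_smul, sub_sub_cancel]
    · rw [hgnorm]
      exact f.mkContinuous_norm_le (norm_nonneg _) hfb
  · intro h x t ht
    by_cases hx : (x : X) = 0
    · rw [hx, norm_zero]; exact norm_nonneg _
    obtain ⟨ys, hys1, hys2⟩ := exists_dual_vector 𝕜 (x : X) (norm_ne_zero_iff.mpr hx)
    obtain ⟨xstar, zstar, h1, h2, h3⟩ := h t ht ys
    have key : xstar ((x : X) - (t : 𝕜) • B x) = (‖(x : X)‖ : 𝕜) := by
      rw [map_sub, map_smul, h1 x, smul_eq_mul, ← hys2, ← h2]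
      simp [smul_eq_mul, RCLike.real_smul_eq_coe_mul]
    calc ‖(x : X)‖ = ‖xstar ((x : X) - (t : 𝕜) • B x)‖ := by
          rw [key, RCLike.norm_ofReal, abs_of_nonneg (norm_nonneg _)]
      _ ≤ ‖xstar‖ * ‖(x : X) - (t : 𝕜) • B x‖ := xstar.le_opNorm _
      _ ≤ 1 * ‖(x : X) - (t : 𝕜) • B x‖ := by
          apply mul_le_mul_of_nonneg_right _ (norm_nonneg _)
          exact hys1 ▸ h3
      _ = _ := one_mul _
end

section
/- Let B be a densely defined dissipative operator on a Hilbert space V and let A ∈ L(V) be coercive, i.e. Re⟨Av, v⟩ ≥ α‖v‖² for all v ∈ V with some α > 0. Then there exists β > 0 such that ‖Av − Bv‖ ≥ β(‖v‖ + ‖Bv‖) for all v ∈ dom(B). -/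
/-- Proposition 3.7: if `B` is a densely defined dissipative operator on a
Hilbert space `V` and `A` is bounded and coercive with constant `α > 0`,
then `‖Av - Bv‖ ≥ β(‖v‖ + ‖Bv‖)` on `dom(B)` for some `β > 0`. -/
theorem stmt5 {𝕜 V : Type*} [RCLike 𝕜]
    [NormedAddCommGroup V] [InnerProductSpace 𝕜 V] [CompleteSpace V]
    (D : Submodule 𝕜 V) (hD : Dense (D : Set V)) (B : D →ₗ[𝕜] V)
    (hdiss : ∀ v : D, RCLike.re (inner 𝕜 (B v) (v : V) : 𝕜) ≤ 0)
    (A : V →L[𝕜] V) (α : ℝ) (hα : 0 < α)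
    (hcoer : ∀ v : V, α * ‖v‖ ^ 2 ≤ RCLike.re (inner 𝕜 (A v) v : 𝕜)) :
    ∃ β : ℝ, 0 < β ∧ ∀ v : D, β * (‖(v : V)‖ + ‖B v‖) ≤ ‖A (v : V) - B v‖ := by
  have hApos : (0:ℝ) < 1 + α + ‖A‖ := by positivity
  refine ⟨α / (1 + α + ‖A‖), by positivity, fun v => ?_⟩
  set N := ‖A (v : V) - B v‖ with hN
  -- Step 1: α * ‖v‖ ≤ N
  have hkey : α * ‖(v : V)‖ ≤ N := by
    have h1 : α * ‖(v : V)‖ ^ 2 ≤ RCLike.re (inner 𝕜 (A (v : V) - B v) (v : V) : 𝕜) := by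
      have := hcoer (v : V)
      have h2 := hdiss v
      rw [inner_sub_left, map_sub]
      linarith
    have h3 : RCLike.re (inner 𝕜 (A (v : V) - B v) (v : V) : 𝕜) ≤ N * ‖(v : V)‖ := by
      calc RCLike.re (inner 𝕜 (A (v : V) - B v) (v : V) : 𝕜)
          ≤ ‖(inner 𝕜 (A (v : V) - B v) (v : V) : 𝕜)‖ := RCLike.re_le_norm _
        _ ≤ N * ‖(v : V)‖ := norm_inner_le_norm _ _
    rcases eq_or_lt_of_le (norm_nonneg (v : V)) with h | h
    · rw [← h, mul_zero]; exact norm_nonneg _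
    · have : α * ‖(v : V)‖ ^ 2 ≤ N * ‖(v : V)‖ := le_trans h1 h3
      nlinarith
  -- Step 2: ‖B v‖ ≤ N + ‖A‖ * ‖v‖
  have h2 : ‖B v‖ ≤ N + ‖A‖ * ‖(v : V)‖ := by
    have h4 : ‖B v‖ ≤ ‖A (v : V)‖ + ‖A (v : V) - B v‖ := by
      calc ‖B v‖ = ‖A (v : V) - (A (v : V) - B v)‖ := by rw [sub_sub_cancel]
        _ ≤ ‖A (v : V)‖ + ‖A (v : V) - B v‖ := norm_sub_le _ _
    have := A.le_opNorm (v : V)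
    linarith
  have hA0 : (0:ℝ) ≤ ‖A‖ := norm_nonneg _
  rw [div_mul_eq_mul_div, div_le_iff₀ hApos]
  nlinarith [norm_nonneg (v:V), hkey, h2]
end

section
/- Let B be a densely defined dissipative operator on a Hilbert space V and A ∈ L(V) coercive with constant α > 0. Decompose A = A₊ + A₋ with A₊ = (A + A*)/2 and A₋ = (A − A*)/2, and let S = √(A₊). Then for all v ∈ dom(B), ‖(A − B)v‖² ≥ β²(‖Bv‖² + ‖v‖²) where β² = min{ α²/2 , α²/((α + 2‖S⁻¹A₋‖²)‖A₊‖) }; in particular the constant β depends only on A and α, not on B. -/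
set_option maxHeartbeats 1000000


open ContinuousLinearMap

/-- Second proof of Proposition 3.7, with an explicit constant: for a densely
defined dissipative operator `B` on a complex Hilbert space `V` and a
coercive bounded operator `A` with constant `α > 0`, writing
`A₊ = (A + A*)/2`, `A₋ = (A - A*)/2` and `S = √A₊` (a positive selfadjoint
invertible square root of `A₊`, with inverse `Sinv`), one has
`‖(A-B)v‖² ≥ β²(‖Bv‖² + ‖v‖²)` with
`β² = min{α²/2, α²/((α + 2‖S⁻¹A₋‖²)‖A₊‖)}`, a constant depending only on
`A` and `α`, not on `B`. -/
theorem stmt6 {V : Type*}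
    [NormedAddCommGroup V] [InnerProductSpace ℂ V] [CompleteSpace V]
    (D : Submodule ℂ V) (hD : Dense (D : Set V)) (B : D →ₗ[ℂ] V)
    (hdiss : ∀ v : D, RCLike.re (inner ℂ (B v) (v : V) : ℂ) ≤ 0)
    (A : V →L[ℂ] V) (α : ℝ) (hα : 0 < α)
    (hcoer : ∀ v : V, α * ‖v‖ ^ 2 ≤ RCLike.re (inner ℂ (A v) v : ℂ))
    (S Sinv : V →L[ℂ] V)
    (hSpos : S.IsPositive)
    (hSsq : S ∘L S = (1 / 2 : ℂ) • (A + ContinuousLinearMap.adjoint A))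
    (hSinv₁ : Sinv ∘L S = 1) (hSinv₂ : S ∘L Sinv = 1) :
    ∀ v : D,
      min (α ^ 2 / 2)
          (α ^ 2 /
            ((α + 2 * ‖Sinv ∘L ((1 / 2 : ℂ) • (A - ContinuousLinearMap.adjoint A))‖ ^ 2) *
              ‖(1 / 2 : ℂ) • (A + ContinuousLinearMap.adjoint A)‖)) *
        (‖B v‖ ^ 2 + ‖(v : V)‖ ^ 2) ≤ ‖A (v : V) - B v‖ ^ 2 := by
  intro v
  set Ap : V →L[ℂ] V := (1 / 2 : ℂ) • (A + ContinuousLinearMap.adjoint A) with hAp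
  set Am : V →L[ℂ] V := (1 / 2 : ℂ) • (A - ContinuousLinearMap.adjoint A) with hAm
  set K : V →L[ℂ] V := Sinv ∘L Am with hK
  have hSsa : ContinuousLinearMap.adjoint S = S := isSelfAdjoint_iff'.mp hSpos.isSelfAdjoint
  -- re ⟪A x, x⟫ = ‖S x‖ ^ 2
  have hre : ∀ x : V, RCLike.re (inner ℂ (A x) x : ℂ) = ‖S x‖ ^ 2 := by
    intro x
    have h1 : Ap x = S (S x) := by rw [← hSsq]; rfl
    have h2 : (inner ℂ (Ap x) x : ℂ) = inner ℂ (S x) (S x) := by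
      have h := ContinuousLinearMap.adjoint_inner_left S x (S x)
      rw [hSsa] at h
      rw [h1, h]
    have h3 : (inner ℂ (Ap x) x : ℂ)
        = (1 / 2 : ℂ) * ((inner ℂ (A x) x : ℂ) + starRingEnd ℂ (inner ℂ (A x) x : ℂ)) := by
      rw [hAp]
      simp only [ContinuousLinearMap.smul_apply, ContinuousLinearMap.add_apply,
        inner_smul_left, inner_add_left, ContinuousLinearMap.adjoint_inner_left,
        ← inner_conj_symm x (A x)]
      norm_num [Complex.ext_iff]
    have h4 : RCLike.re (inner ℂ (Ap x) x : ℂ) = RCLike.re (inner ℂ (A x) x : ℂ) := by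
      rw [h3, Complex.add_conj]
      simp
    rw [← h4, h2, inner_self_eq_norm_sq]
  have hre2 : ∀ x : V, RCLike.re (inner ℂ (Ap x) x : ℂ) = ‖S x‖ ^ 2 := by
    intro x
    have h1 : Ap x = S (S x) := by rw [← hSsq]; rfl
    have h := ContinuousLinearMap.adjoint_inner_left S x (S x)
    rw [hSsa] at h
    rw [h1, h, inner_self_eq_norm_sq]
  set M := ‖Ap‖ with hMdef
  set k := ‖K‖ with hkdef
  by_cases hM0 : M = 0
  · -- degenerate case: Ap = 0, hence v = 0
    have hAp0 : Ap = 0 := norm_eq_zero.mp hM0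
    have hv0 : (v : V) = 0 := by
      have h1 := hcoer (v : V)
      rw [hre] at h1
      have h2 : ‖S (v : V)‖ ^ 2 = 0 := by
        have := hre2 (v : V)
        rw [hAp0] at this
        simpa using this.symm
      have : ‖(v : V)‖ ^ 2 ≤ 0 := by nlinarith
      have : ‖(v : V)‖ = 0 := by nlinarith [norm_nonneg (v : V)]
      simpa using this
    have hv0' : v = 0 := by exact_mod_cast Subtype.ext hv0
    rw [hv0']
    simp
  have hM : 0 < M := (norm_nonneg Ap).lt_of_ne' hM0
  set w : V := A (v : V) - B v with hw
  set z : V := Sinv w with hzdef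
  have hSz : S z = w := by
    rw [hzdef, ← ContinuousLinearMap.comp_apply, hSinv₂, ContinuousLinearMap.one_apply]
  set t := ‖(v : V)‖ with htdef
  set p := ‖S (v : V)‖ with hpdef
  set s := ‖S (v : V) - z‖ with hsdef
  set Zn := ‖z‖ with hZdef
  set Wn := ‖w‖ with hWdef
  set b := ‖B v‖ with hbdef
  -- coercivity at v
  have hf : α * t ^ 2 ≤ p ^ 2 := by
    have h1 := hcoer (v : V)
    rwa [hre] at h1
  -- dissipativity: p² ≤ re ⟪z, S v⟫
  have hdis' : p ^ 2 ≤ RCLike.re (inner ℂ z (S (v : V)) : ℂ) := by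
    have e1 : (inner ℂ w (v : V) : ℂ) = inner ℂ z (S (v : V)) := by
      have h := ContinuousLinearMap.adjoint_inner_left S (v : V) z
      rw [hSsa, hSz] at h
      exact h
    have e2 : RCLike.re (inner ℂ w (v : V) : ℂ)
        = RCLike.re (inner ℂ (A (v : V)) (v : V) : ℂ) - RCLike.re (inner ℂ (B v) (v : V) : ℂ) := by
      rw [hw, inner_sub_left, map_sub]
    have h3 := hdiss v
    have h4 := hre (v : V)
    rw [← e1, e2, h4]
    linarith
  -- s² ≤ Zn² - p²
  have hs : s ^ 2 ≤ Zn ^ 2 - p ^ 2 := by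
    have h1 := norm_sub_sq (𝕜 := ℂ) (S (v : V)) z
    have h2 : RCLike.re (inner ℂ (S (v : V)) z : ℂ) = RCLike.re (inner ℂ z (S (v : V)) : ℂ) :=
      inner_re_symm _ _
    rw [← hsdef, ← hpdef, ← hZdef] at h1
    rw [h2] at h1
    linarith
  -- coercivity at z
  have hZ : α * Zn ^ 2 ≤ Wn ^ 2 := by
    have h1 := hcoer z
    rw [hre z, hSz] at h1
    exact h1
  -- decomposition of Sinv (B v)
  have hAd : Ap + Am = A := by
    rw [hAp, hAm]
    ext x
    simp only [ContinuousLinearMap.add_apply, ContinuousLinearMap.smul_apply,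
      ContinuousLinearMap.sub_apply]
    module
  have hSinvB : Sinv (B v) = S (v : V) + K (v : V) - z := by
    have hBv : B v = A (v : V) - w := by rw [hw]; abel
    have hSA : Sinv (A (v : V)) = S (v : V) + K (v : V) := by
      rw [← hAd]
      have h1 : (Ap + Am) (v : V) = Ap (v : V) + Am (v : V) := rfl
      rw [h1, map_add]
      have h2 : Ap (v : V) = S (S (v : V)) := by rw [← hSsq]; rfl
      have h3 : Sinv (S (S (v : V))) = S (v : V) := by
        rw [← ContinuousLinearMap.comp_apply, hSinv₁, ContinuousLinearMap.one_apply]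
      rw [h2, h3]
      rfl
    rw [hBv, map_sub, hSA, hzdef]
  -- norm of S squared is M
  have hSnorm : ‖S‖ * ‖S‖ = M := by
    have h := ContinuousLinearMap.norm_adjoint_comp_self S
    rw [hSsa, hSsq] at h
    exact h.symm
  -- bound on b²
  have hb : b ^ 2 ≤ M * (s + k * t) ^ 2 := by
    have h1 : B v = S (Sinv (B v)) := by
      rw [← ContinuousLinearMap.comp_apply, hSinv₂, ContinuousLinearMap.one_apply]
    have h2 : b ≤ ‖S‖ * ‖Sinv (B v)‖ := by
      rw [hbdef]
      nth_rewrite 1 [h1]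
      exact ContinuousLinearMap.le_opNorm S _
    have h3 : ‖Sinv (B v)‖ ≤ s + k * t := by
      rw [hSinvB]
      have e : S (v : V) + K (v : V) - z = (S (v : V) - z) + K (v : V) := by abel
      rw [e]
      calc ‖(S (v : V) - z) + K (v : V)‖ ≤ ‖S (v : V) - z‖ + ‖K (v : V)‖ := norm_add_le _ _
        _ ≤ s + k * t := by
            have := ContinuousLinearMap.le_opNorm K (v : V)
            rw [← hsdef]
            linarith
    have h4 : b ≤ ‖S‖ * (s + k * t) := by
      calc b ≤ ‖S‖ * ‖Sinv (B v)‖ := h2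
        _ ≤ ‖S‖ * (s + k * t) := by
            exact mul_le_mul_of_nonneg_left h3 (norm_nonneg S)
    have hb0 : (0:ℝ) ≤ b := norm_nonneg _
    nlinarith [norm_nonneg S]
  -- scalar arithmetic
  have hk0 : (0:ℝ) ≤ k := norm_nonneg _
  have ht0 : (0:ℝ) ≤ t := norm_nonneg _
  have hs0 : (0:ℝ) ≤ s := norm_nonneg _
  clear_value M k t p s Zn Wn b
  set m := min (α ^ 2 / 2) (α ^ 2 / ((α + 2 * k ^ 2) * M)) with hmdef
  have hc : (0:ℝ) < (α + 2 * k ^ 2) * M :=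
    mul_pos (by nlinarith [sq_nonneg k]) hM
  have hm0 : (0:ℝ) ≤ m := le_min (by positivity) (div_nonneg (sq_nonneg α) hc.le)
  have hm2 : m ≤ α ^ 2 / 2 := min_le_left _ _
  have hmq : m * ((α + 2 * k ^ 2) * M) ≤ α ^ 2 := by
    calc m * ((α + 2 * k ^ 2) * M)
        ≤ (α ^ 2 / ((α + 2 * k ^ 2) * M)) * ((α + 2 * k ^ 2) * M) :=
          mul_le_mul_of_nonneg_right (min_le_right _ _) hc.le
      _ = α ^ 2 := div_mul_cancel₀ _ hc.ne'
  have key1 : α * (s + k * t) ^ 2 ≤ (α + 2 * k ^ 2) * (s ^ 2 + α * t ^ 2 / 2) := by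
    nlinarith [sq_nonneg (2 * k * s - α * t)]
  have key2 : m * b ^ 2 ≤ α * (s ^ 2 + α * t ^ 2 / 2) := by
    have hx0 : (0:ℝ) ≤ s ^ 2 + α * t ^ 2 / 2 := by positivity
    have c1 : m * b ^ 2 * α ≤ m * (M * (s + k * t) ^ 2) * α :=
      mul_le_mul_of_nonneg_right (mul_le_mul_of_nonneg_left hb hm0) hα.le
    have c2 : (m * M) * (α * (s + k * t) ^ 2) ≤ (m * M) * ((α + 2 * k ^ 2) * (s ^ 2 + α * t ^ 2 / 2)) :=
      mul_le_mul_of_nonneg_left key1 (mul_nonneg hm0 hM.le)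
    have c3 : (m * ((α + 2 * k ^ 2) * M)) * (s ^ 2 + α * t ^ 2 / 2) ≤ α ^ 2 * (s ^ 2 + α * t ^ 2 / 2) :=
      mul_le_mul_of_nonneg_right hmq hx0
    have c4 : m * b ^ 2 * α ≤ (α * (s ^ 2 + α * t ^ 2 / 2)) * α := by
      calc m * b ^ 2 * α ≤ m * (M * (s + k * t) ^ 2) * α := c1
        _ = (m * M) * (α * (s + k * t) ^ 2) := by ring
        _ ≤ (m * M) * ((α + 2 * k ^ 2) * (s ^ 2 + α * t ^ 2 / 2)) := c2
        _ = (m * ((α + 2 * k ^ 2) * M)) * (s ^ 2 + α * t ^ 2 / 2) := by ring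
        _ ≤ α ^ 2 * (s ^ 2 + α * t ^ 2 / 2) := c3
        _ = (α * (s ^ 2 + α * t ^ 2 / 2)) * α := by ring
    exact le_of_mul_le_mul_right c4 hα
  calc m * (b ^ 2 + t ^ 2) = m * b ^ 2 + m * t ^ 2 := by ring
    _ ≤ (α * (s ^ 2 + α * t ^ 2 / 2)) + (α ^ 2 / 2) * t ^ 2 :=
        add_le_add key2 (mul_le_mul_of_nonneg_right hm2 (sq_nonneg t))
    _ = α * s ^ 2 + α ^ 2 * t ^ 2 := by ring
    _ ≤ α * Zn ^ 2 := by nlinarith [mul_le_mul_of_nonneg_left hs hα.le, mul_le_mul_of_nonneg_left hf hα.le]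
    _ ≤ Wn ^ 2 := hZ
end

section
/- Let V be a Hilbert space, R a dense subspace, and 𝒟₀ : R → V' a derivation, i.e. ⟨𝒟₀u, v⟩ + conj(⟨𝒟₀v, u⟩) = 0 for all u, v ∈ R. Define W = { v ∈ V : ∃ f ∈ V' such that ⟨f, r⟩ + conj(⟨𝒟₀r, v⟩) = 0 for all r ∈ R } with 𝒟v := f. Then W is a Hilbert space for the inner product ⟨v,w⟩_W = ⟨v,w⟩_V + ⟨𝒟v, 𝒟w⟩_{V'}, and R ⊆ W with 𝒟r = 𝒟₀r for all r ∈ R. -/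
lemma stmt7_uniq {𝕜 V : Type*} [RCLike 𝕜]
    [NormedAddCommGroup V] [InnerProductSpace 𝕜 V]
    (R : Submodule 𝕜 V) (hR : Dense (R : Set V))
    (f g : V →SL[starRingEnd 𝕜] 𝕜)
    (h : ∀ r : R, f (r : V) = g (r : V)) : f = g := by
  have hfun : ⇑f = ⇑g :=
    Continuous.ext_on hR f.continuous g.continuous (fun x hx => h ⟨x, hx⟩)
  exact ContinuousLinearMap.ext fun x => congrFun hfun x

/-- Lemma 3.1 (and the construction of the extended domain): given a
derivation `D0 : R → V'` (`V'` = continuous antilinear functionals on `V`)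
on a dense subspace `R` of a Hilbert space `V`, the extended domain
`W = {v ∈ V : ∃ f ∈ V', ⟨f,r⟩ + conj ⟨D0 r, v⟩ = 0 ∀ r ∈ R}` satisfies:
the witness `f =: 𝒟v` is unique, `R ⊆ W` with `𝒟r = D0 r`, `W` is a
subspace on which `𝒟` is linear, and `W` is complete for the norm coming
from the inner product `⟨v,w⟩_V + ⟨𝒟v,𝒟w⟩_{V'}` (equivalently, for the
norm `‖v‖ + ‖𝒟v‖`), i.e. `W` is a Hilbert space. -/
theorem stmt7 {𝕜 V : Type*} [RCLike 𝕜]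
    [NormedAddCommGroup V] [InnerProductSpace 𝕜 V] [CompleteSpace V]
    (R : Submodule 𝕜 V) (hR : Dense (R : Set V))
    (D0 : R →ₗ[𝕜] (V →SL[starRingEnd 𝕜] 𝕜))
    (hder : ∀ u v : R, D0 u (v : V) + (starRingEnd 𝕜) (D0 v (u : V)) = 0)
    (Wset : Set V)
    (hWset : Wset = {v : V | ∃ f : V →SL[starRingEnd 𝕜] 𝕜,
        ∀ r : R, f (r : V) + (starRingEnd 𝕜) (D0 r v) = 0})
    (DD : V → (V →SL[starRingEnd 𝕜] 𝕜))
    (hDD : ∀ v ∈ Wset, ∀ r : R, DD v (r : V) + (starRingEnd 𝕜) (D0 r v) = 0) :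
    (∀ v ∈ Wset, ∀ f g : V →SL[starRingEnd 𝕜] 𝕜,
        (∀ r : R, f (r : V) + (starRingEnd 𝕜) (D0 r v) = 0) →
        (∀ r : R, g (r : V) + (starRingEnd 𝕜) (D0 r v) = 0) → f = g) ∧
    (∀ r : R, (r : V) ∈ Wset ∧ DD (r : V) = D0 r) ∧
    (∀ v ∈ Wset, ∀ w ∈ Wset, ∀ c : 𝕜,
        v + w ∈ Wset ∧ c • v ∈ Wset ∧
        DD (v + w) = DD v + DD w ∧ DD (c • v) = c • DD v) ∧
    (∀ u : ℕ → V, (∀ n, u n ∈ Wset) →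
      (∀ ε : ℝ, 0 < ε → ∃ N : ℕ, ∀ m ≥ N, ∀ n ≥ N,
          ‖u m - u n‖ + ‖DD (u m) - DD (u n)‖ < ε) →
      ∃ w ∈ Wset, Filter.Tendsto (fun n => ‖u n - w‖ + ‖DD (u n) - DD w‖)
          Filter.atTop (nhds 0)) := by
  -- uniqueness
  have uniq : ∀ v : V, ∀ f g : V →SL[starRingEnd 𝕜] 𝕜,
      (∀ r : R, f (r : V) + (starRingEnd 𝕜) (D0 r v) = 0) →
      (∀ r : R, g (r : V) + (starRingEnd 𝕜) (D0 r v) = 0) → f = g := by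
    intro v f g hf hg
    refine stmt7_uniq R hR f g fun r => ?_
    have h1 := hf r
    have h2 := hg r
    have : f (r : V) = -(starRingEnd 𝕜) (D0 r v) := eq_neg_of_add_eq_zero_left h1
    rw [this, eq_neg_of_add_eq_zero_left h2]
  refine ⟨fun v _ => uniq v, ?_, ?_, ?_⟩
  · -- R ⊆ W and DD = D0 on R
    intro r
    have hmem : (r : V) ∈ Wset := by
      rw [hWset]
      exact ⟨D0 r, fun r' => hder r r'⟩
    refine ⟨hmem, uniq (r : V) _ _ (hDD _ hmem) (fun r' => hder r r')⟩
  · -- linearity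
    intro v hv w hw c
    have hvw : ∀ r : R, (DD v + DD w) (r : V)
        + (starRingEnd 𝕜) (D0 r (v + w)) = 0 := by
      intro r
      have h1 := hDD v hv r
      have h2 := hDD w hw r
      simp only [ContinuousLinearMap.add_apply, map_add]
      linear_combination h1 + h2
    have hcv : ∀ r : R, (c • DD v) (r : V)
        + (starRingEnd 𝕜) (D0 r (c • v)) = 0 := by
      intro r
      have h1 := hDD v hv r
      have : (D0 r) (c • v) = (starRingEnd 𝕜) c * (D0 r) v := by
        exact (D0 r).map_smulₛₗ c v
      rw [this]
      simp only [ContinuousLinearMap.smul_apply, map_mul, RCLike.conj_conj,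
        smul_eq_mul]
      linear_combination c * h1
    have hmem1 : v + w ∈ Wset := by rw [hWset]; exact ⟨DD v + DD w, hvw⟩
    have hmem2 : c • v ∈ Wset := by rw [hWset]; exact ⟨c • DD v, hcv⟩
    exact ⟨hmem1, hmem2, uniq _ _ _ (hDD _ hmem1) hvw,
      uniq _ _ _ (hDD _ hmem2) hcv⟩
  · -- completeness
    intro u hu hcau
    have hnn : ∀ m n : ℕ, (0:ℝ) ≤ ‖u m - u n‖ := fun m n => norm_nonneg _
    have hc1 : CauchySeq u := by
      refine Metric.cauchySeq_iff.mpr fun ε hε => ?_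
      obtain ⟨N, hN⟩ := hcau ε hε
      refine ⟨N, fun m hm n hn => ?_⟩
      have := hN m hm n hn
      rw [dist_eq_norm]
      have h0 : (0:ℝ) ≤ ‖DD (u m) - DD (u n)‖ := norm_nonneg _
      linarith
    have hc2 : CauchySeq (fun n => DD (u n)) := by
      refine Metric.cauchySeq_iff.mpr fun ε hε => ?_
      obtain ⟨N, hN⟩ := hcau ε hε
      refine ⟨N, fun m hm n hn => ?_⟩
      have := hN m hm n hn
      rw [dist_eq_norm]
      have h0 : (0:ℝ) ≤ ‖u m - u n‖ := norm_nonneg _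
      linarith
    obtain ⟨w, hw⟩ := cauchySeq_tendsto_of_complete hc1
    obtain ⟨F, hF⟩ := cauchySeq_tendsto_of_complete hc2
    -- evaluation convergence
    have heval : ∀ x : V, Filter.Tendsto (fun n => DD (u n) x)
        Filter.atTop (nhds (F x)) := by
      intro x
      have hb : ∀ n, ‖DD (u n) x - F x‖ ≤ ‖DD (u n) - F‖ * ‖x‖ := by
        intro n
        have : DD (u n) x - F x = (DD (u n) - F) x := by simp
        rw [this]
        exact (DD (u n) - F).le_opNorm x
      have hFn : Filter.Tendsto (fun n => ‖DD (u n) - F‖ * ‖x‖)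
          Filter.atTop (nhds 0) := by
        have := (tendsto_iff_norm_sub_tendsto_zero.mp hF)
        simpa using this.mul_const ‖x‖
      have := squeeze_zero (fun n => norm_nonneg _) hb hFn
      exact tendsto_iff_norm_sub_tendsto_zero.mpr this
    have hwW : ∀ r : R, F (r : V) + (starRingEnd 𝕜) (D0 r w) = 0 := by
      intro r
      have ht : Filter.Tendsto
          (fun n => DD (u n) (r : V) + (starRingEnd 𝕜) (D0 r (u n)))
          Filter.atTop (nhds (F (r : V) + (starRingEnd 𝕜) (D0 r w))) := by
        refine Filter.Tendsto.add (heval (r : V)) ?_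
        have h1 : Filter.Tendsto (fun n => (D0 r) (u n)) Filter.atTop
            (nhds ((D0 r) w)) := ((D0 r).continuous.tendsto w).comp hw
        exact (RCLike.continuous_conj.tendsto _).comp h1
      have hconst : (fun n => DD (u n) (r : V) + (starRingEnd 𝕜) (D0 r (u n)))
          = fun _ => (0:𝕜) := funext fun n => hDD (u n) (hu n) r
      rw [hconst] at ht
      exact (tendsto_nhds_unique tendsto_const_nhds ht).symm
    have hmem : w ∈ Wset := by rw [hWset]; exact ⟨F, hwW⟩
    have hDDw : DD w = F := uniq w _ _ (hDD w hmem) hwW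
    refine ⟨w, hmem, ?_⟩
    have t1 : Filter.Tendsto (fun n => ‖u n - w‖) Filter.atTop (nhds 0) :=
      tendsto_iff_norm_sub_tendsto_zero.mp hw
    have t2 : Filter.Tendsto (fun n => ‖DD (u n) - DD w‖) Filter.atTop
        (nhds 0) := by
      rw [hDDw]; exact tendsto_iff_norm_sub_tendsto_zero.mp hF
    simpa using t1.add t2
end

section
/- Let 𝒟₀ : R → V' be a derivation with extended domain W, extension 𝒟, and boundary form b(v,w) = ⟨𝒟v, w⟩ + conj(⟨𝒟w, v⟩). Let Z ⊆ W be a closed admissible subspace and 𝒜 ∈ L(V, V') coercive with constant α > 0. Then for every continuous antilinear functional L on Z there exists v ∈ V such that −conj(⟨𝒟z, v⟩) + ⟨𝒜v, z⟩ = L(z) for all z ∈ Z. If moreover Z is strongly admissible, this v is unique. -/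
open InnerProductSpace

set_option linter.unusedSectionVars false


section Aux
variable {𝕜 V : Type*} [RCLike 𝕜] [NormedAddCommGroup V] [InnerProductSpace 𝕜 V] [CompleteSpace V]

/-- The conjugate of a continuous antilinear functional, as a continuous linear functional. -/
noncomputable def conjCLM (f : V →SL[starRingEnd 𝕜] 𝕜) : V →L[𝕜] 𝕜 :=
  LinearMap.mkContinuous
    { toFun := fun x => (starRingEnd 𝕜) (f x)
      map_add' := fun x y => by simp
      map_smul' := fun c x => by
        simp [ContinuousLinearMap.map_smulₛₗ, smul_eq_mul] }
    ‖f‖ (fun x => by simpa using f.le_opNorm x)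

lemma conjCLM_apply (f : V →SL[starRingEnd 𝕜] 𝕜) (x : V) :
    conjCLM f x = (starRingEnd 𝕜) (f x) := rfl

/-- Riesz representative of a continuous antilinear functional. -/
noncomputable def Jfun (f : V →SL[starRingEnd 𝕜] 𝕜) : V :=
  (toDual 𝕜 V).symm (conjCLM f)

lemma inner_Jfun_right (f : V →SL[starRingEnd 𝕜] 𝕜) (x : V) :
    ⟪x, Jfun f⟫_𝕜 = f x := by
  have h : ⟪Jfun f, x⟫_𝕜 = conjCLM f x := toDual_symm_apply
  calc ⟪x, Jfun f⟫_𝕜 = (starRingEnd 𝕜) ⟪Jfun f, x⟫_𝕜 := by rw [inner_conj_symm]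
    _ = f x := by rw [h, conjCLM_apply, RCLike.conj_conj]

lemma inner_Jfun_left (f : V →SL[starRingEnd 𝕜] 𝕜) (x : V) :
    ⟪Jfun f, x⟫_𝕜 = (starRingEnd 𝕜) (f x) := by
  rw [← inner_conj_symm, inner_Jfun_right]

lemma norm_Jfun (f : V →SL[starRingEnd 𝕜] 𝕜) : ‖Jfun f‖ = ‖f‖ := by
  apply le_antisymm
  · have h1 : ‖Jfun f‖ = ‖conjCLM f‖ := LinearIsometryEquiv.norm_map _ _
    rw [h1]
    exact LinearMap.mkContinuous_norm_le _ (norm_nonneg f) _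
  · apply ContinuousLinearMap.opNorm_le_bound _ (norm_nonneg _)
    intro x
    calc ‖f x‖ = ‖⟪x, Jfun f⟫_𝕜‖ := by rw [inner_Jfun_right]
      _ ≤ ‖x‖ * ‖Jfun f‖ := norm_inner_le_norm _ _
      _ = ‖Jfun f‖ * ‖x‖ := mul_comm _ _

/-- `Jfun` as a continuous linear map. -/
noncomputable def JL : (V →SL[starRingEnd 𝕜] 𝕜) →L[𝕜] V :=
  LinearMap.mkContinuous
    { toFun := Jfun
      map_add' := fun f g => ext_inner_left 𝕜 fun v => by
        simp [inner_Jfun_right, inner_add_right]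
      map_smul' := fun c f => ext_inner_left 𝕜 fun v => by
        simp [inner_Jfun_right, inner_smul_right] }
    1 (fun f => by simp [norm_Jfun])

lemma JL_apply (f : V →SL[starRingEnd 𝕜] 𝕜) : JL f = Jfun f := rfl

/-- The "adjoint-like" map `z ↦ (v ↦ 𝒜 v z)` represented in `V`. -/
noncomputable def ATmap (𝒜 : V →L[𝕜] (V →SL[starRingEnd 𝕜] 𝕜)) : V →L[𝕜] V :=
  LinearMap.mkContinuous
    { toFun := fun z => (toDual 𝕜 V).symm (𝒜.flip z)
      map_add' := fun z₁ z₂ => ext_inner_right 𝕜 fun v => by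
        simp [toDual_symm_apply, inner_add_left]
      map_smul' := fun c z => ext_inner_right 𝕜 fun v => by
        simp [toDual_symm_apply, inner_smul_left] }
    ‖𝒜‖ (fun z => by
      have h1 : ‖(toDual 𝕜 V).symm (𝒜.flip z)‖ = ‖𝒜.flip z‖ :=
        LinearIsometryEquiv.norm_map _ _
      show ‖(toDual 𝕜 V).symm (𝒜.flip z)‖ ≤ ‖𝒜‖ * ‖z‖
      rw [h1]
      apply ContinuousLinearMap.opNorm_le_bound _ (by positivity)
      intro v
      calc ‖𝒜.flip z v‖ = ‖𝒜 v z‖ := by rw [ContinuousLinearMap.flip_apply]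
        _ ≤ ‖𝒜 v‖ * ‖z‖ := (𝒜 v).le_opNorm z
        _ ≤ (‖𝒜‖ * ‖v‖) * ‖z‖ := by
            apply mul_le_mul_of_nonneg_right (𝒜.le_opNorm v) (norm_nonneg z)
        _ = ‖𝒜‖ * ‖z‖ * ‖v‖ := by ring)

lemma inner_ATmap (𝒜 : V →L[𝕜] (V →SL[starRingEnd 𝕜] 𝕜)) (z v : V) :
    ⟪ATmap 𝒜 z, v⟫_𝕜 = 𝒜 v z := by
  have h : ⟪(toDual 𝕜 V).symm (𝒜.flip z), v⟫_𝕜 = 𝒜.flip z v := toDual_symm_apply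
  have h2 : ATmap 𝒜 z = (toDual 𝕜 V).symm (𝒜.flip z) := rfl
  rw [h2, h, ContinuousLinearMap.flip_apply]

end Aux


/-- Abstract existence: if `S` is bounded below on a closed submodule `M` of a
Banach space, then any continuous functional on `M` is represented through `S`. -/
theorem exist_aux {𝕜 E V : Type*} [RCLike 𝕜]
    [NormedAddCommGroup E] [NormedSpace 𝕜 E] [CompleteSpace E]
    [NormedAddCommGroup V] [InnerProductSpace 𝕜 V] [CompleteSpace V]
    (S : E →L[𝕜] V) (M : Submodule 𝕜 E) (hM : IsClosed (M : Set E))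
    (K : ℝ) (hK : ∀ m ∈ M, ‖m‖ ≤ K * ‖S m‖)
    (ℓ : M →L[𝕜] 𝕜) :
    ∃ v : V, ∀ m : M, ⟪S (m : E), v⟫_𝕜 = (starRingEnd 𝕜) (ℓ m) := by
  haveI : CompleteSpace M := hM.completeSpace_coe
  set A : M →L[𝕜] V := S.comp M.subtypeL with hA
  have hbound : ∀ m : M, ‖m‖ ≤ (K.toNNReal : ℝ) * ‖A m‖ := by
    intro m
    calc ‖m‖ ≤ K * ‖S (m : E)‖ := hK _ m.2
      _ ≤ (K.toNNReal : ℝ) * ‖S (m : E)‖ :=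
          mul_le_mul_of_nonneg_right (Real.le_coe_toNNReal K) (norm_nonneg _)
      _ = (K.toNNReal : ℝ) * ‖A m‖ := rfl
  have antilip : AntilipschitzWith K.toNNReal A := A.antilipschitz_of_bound hbound
  set N : Submodule 𝕜 V := LinearMap.range (A : M →ₗ[𝕜] V) with hN
  have hNset : (N : Set V) = Set.range A := by
    ext x; simp [hN, LinearMap.mem_range]
  have hNclosed : IsClosed (N : Set V) := by
    rw [hNset]; exact antilip.isClosed_range A.uniformContinuous
  haveI : CompleteSpace N := hNclosed.completeSpace_coe
  set A' : M →L[𝕜] N := A.codRestrict N (fun m => LinearMap.mem_range_self _ m) with hA'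
  have hinj : LinearMap.ker (A' : M →ₗ[𝕜] N) = ⊥ := by
    apply LinearMap.ker_eq_bot.mpr
    intro m₁ m₂ h
    apply antilip.injective
    exact congrArg Subtype.val h
  have hsurj : LinearMap.range (A' : M →ₗ[𝕜] N) = ⊤ := by
    apply LinearMap.range_eq_top.mpr
    rintro ⟨x, hx⟩
    obtain ⟨m, hm⟩ := hx
    exact ⟨m, Subtype.ext hm⟩
  set e := ContinuousLinearEquiv.ofBijective A' hinj hsurj with he
  set ℓN : N →L[𝕜] 𝕜 := ℓ.comp (e.symm : N →L[𝕜] M) with hℓN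
  set y : N := (toDual 𝕜 N).symm ℓN with hy
  refine ⟨(y : V), fun m => ?_⟩
  have h2 : ((A' m : N) : V) = S (m : E) := rfl
  have h3 : e m = A' m := rfl
  calc ⟪S (m : E), (y : V)⟫_𝕜 = ⟪((A' m : N) : V), (y : V)⟫_𝕜 := by rw [h2]
    _ = ⟪A' m, y⟫_𝕜 := (Submodule.coe_inner N _ _).symm
    _ = (starRingEnd 𝕜) ⟪y, A' m⟫_𝕜 := by rw [inner_conj_symm]
    _ = (starRingEnd 𝕜) (ℓN (A' m)) := by rw [toDual_symm_apply]
    _ = (starRingEnd 𝕜) (ℓ (e.symm (A' m))) := rfl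
    _ = (starRingEnd 𝕜) (ℓ m) := by rw [← h3, e.symm_apply_apply]

set_option maxHeartbeats 2000000

/-- Theorem 3.5 (well-posedness of the Weak Derivation Problem).
`D0 : R → V'` is a derivation with extended domain `Wset` and extension
`DD`; the boundary form is `b(v,w) = ⟨DD v, w⟩ + conj ⟨DD w, v⟩`.
`Z` is a closed (for the `W`-norm `‖·‖_V + ‖DD ·‖_{V'}`) admissible
subspace (`R ⊆ Z` and `b(z,z) ≤ 0` on `Z`, i.e. `Re⟨DD z, z⟩ ≤ 0`),
`𝒜 ∈ L(V,V')` is coercive with constant `α > 0`, and `L` is a continuous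
antilinear functional on `Z` (for the `W`-norm). Then the weak problem
`-conj⟨DD z, v⟩ + ⟨𝒜 v, z⟩ = L(z)` for all `z ∈ Z` has a solution
`v ∈ V`, which is unique whenever `Z` is strongly admissible
(`b(u,u) ≥ 0` for every `u ∈ Wset` that is `b`-orthogonal to `Z`). -/
theorem stmt8 {𝕜 V : Type*} [RCLike 𝕜]
    [NormedAddCommGroup V] [InnerProductSpace 𝕜 V] [CompleteSpace V]
    (R : Submodule 𝕜 V) (hR : Dense (R : Set V))
    (D0 : R →ₗ[𝕜] (V →SL[starRingEnd 𝕜] 𝕜))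
    (hder : ∀ u v : R, D0 u (v : V) + (starRingEnd 𝕜) (D0 v (u : V)) = 0)
    (Wset : Set V)
    (hWset : Wset = {v : V | ∃ f : V →SL[starRingEnd 𝕜] 𝕜,
        ∀ r : R, f (r : V) + (starRingEnd 𝕜) (D0 r v) = 0})
    (DD : V → (V →SL[starRingEnd 𝕜] 𝕜))
    (hDD : ∀ v ∈ Wset, ∀ r : R, DD v (r : V) + (starRingEnd 𝕜) (D0 r v) = 0)
    (Z : Submodule 𝕜 V) (hZW : (Z : Set V) ⊆ Wset) (hRZ : R ≤ Z)
    (hZadm : ∀ z ∈ Z, RCLike.re (DD z z) ≤ 0)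
    (hZclosed : ∀ u : ℕ → V, (∀ n, u n ∈ Z) → ∀ v ∈ Wset,
        Filter.Tendsto (fun n => ‖u n - v‖ + ‖DD (u n) - DD v‖)
          Filter.atTop (nhds 0) → v ∈ Z)
    (𝒜 : V →L[𝕜] (V →SL[starRingEnd 𝕜] 𝕜)) (α : ℝ) (hα : 0 < α)
    (hcoer : ∀ u : V, α * ‖u‖ ^ 2 ≤ RCLike.re (𝒜 u u))
    (L : V → 𝕜)
    (hLadd : ∀ z₁ ∈ Z, ∀ z₂ ∈ Z, L (z₁ + z₂) = L z₁ + L z₂)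
    (hLsmul : ∀ c : 𝕜, ∀ z ∈ Z, L (c • z) = (starRingEnd 𝕜) c * L z)
    (hLbdd : ∃ C : ℝ, ∀ z ∈ Z, ‖L z‖ ≤ C * (‖z‖ + ‖DD z‖)) :
    (∃ v : V, ∀ z ∈ Z, -(starRingEnd 𝕜) (DD z v) + 𝒜 v z = L z) ∧
    ((∀ u ∈ Wset, (∀ z ∈ Z, DD u z + (starRingEnd 𝕜) (DD z u) = 0) →
        0 ≤ RCLike.re (DD u u)) →
      ∀ v₁ v₂ : V,
        (∀ z ∈ Z, -(starRingEnd 𝕜) (DD z v₁) + 𝒜 v₁ z = L z) →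
        (∀ z ∈ Z, -(starRingEnd 𝕜) (DD z v₂) + 𝒜 v₂ z = L z) → v₁ = v₂) := by
  -- extension by density
  have hext : ∀ f g : V →SL[starRingEnd 𝕜] 𝕜, (∀ r : R, f (r : V) = g (r : V)) → f = g := by
    intro f g h
    apply DFunLike.coe_injective
    apply Continuous.ext_on hR f.continuous g.continuous
    intro x hx
    exact h ⟨x, hx⟩
  have hZWm : ∀ z ∈ Z, z ∈ Wset := fun z hz => hZW hz
  have hRW : ∀ r : R, (r : V) ∈ Wset := fun r => hZWm _ (hRZ r.2)
  have hDDuniq : ∀ v ∈ Wset, ∀ f : V →SL[starRingEnd 𝕜] 𝕜,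
      (∀ r : R, f (r : V) + (starRingEnd 𝕜) (D0 r v) = 0) → DD v = f := by
    intro v hv f hf
    apply hext
    intro r
    have h1 := hDD v hv r
    have h2 := hf r
    linear_combination h1 - h2
  have hDDadd : ∀ z₁ ∈ Z, ∀ z₂ ∈ Z, DD (z₁ + z₂) = DD z₁ + DD z₂ := by
    intro z₁ h₁ z₂ h₂
    apply hDDuniq _ (hZWm _ (Z.add_mem h₁ h₂))
    intro r
    have e₁ := hDD z₁ (hZWm _ h₁) r
    have e₂ := hDD z₂ (hZWm _ h₂) r
    have hr : (D0 r) (z₁ + z₂) = D0 r z₁ + D0 r z₂ := map_add _ _ _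
    simp only [ContinuousLinearMap.add_apply, hr, map_add]
    linear_combination e₁ + e₂
  have hDDsmul : ∀ (c : 𝕜), ∀ z ∈ Z, DD (c • z) = c • DD z := by
    intro c z hz
    apply hDDuniq _ (hZWm _ (Z.smul_mem c hz))
    intro r
    have e := hDD z (hZWm _ hz) r
    have hr : (D0 r) (c • z) = (starRingEnd 𝕜) c • (D0 r z) :=
      ContinuousLinearMap.map_smulₛₗ _ _ _
    simp only [ContinuousLinearMap.smul_apply, hr, smul_eq_mul, map_mul, RCLike.conj_conj]
    linear_combination c * e
  have hDD0 : DD (0 : V) = 0 :=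
    hDDuniq 0 (hZWm 0 Z.zero_mem) 0 (fun r => by simp)
  -- the ambient Banach space and the graph submodule
  let M : Submodule 𝕜 (V × (V →SL[starRingEnd 𝕜] 𝕜)) :=
    { carrier := {p | p.1 ∈ Z ∧ p.2 = DD p.1}
      add_mem' := by
        rintro ⟨a₁, b₁⟩ ⟨a₂, b₂⟩ ⟨ha₁, hb₁⟩ ⟨ha₂, hb₂⟩
        refine ⟨Z.add_mem ha₁ ha₂, ?_⟩
        show b₁ + b₂ = DD (a₁ + a₂)
        simp only at hb₁ hb₂
        rw [hb₁, hb₂, hDDadd _ ha₁ _ ha₂]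
      zero_mem' := ⟨Z.zero_mem, by simp [hDD0]⟩
      smul_mem' := by
        rintro c ⟨a, b⟩ ⟨ha, hb⟩
        refine ⟨Z.smul_mem c ha, ?_⟩
        show c • b = DD (c • a)
        simp only at hb
        rw [hb, hDDsmul c _ ha] }
  have hmemM : ∀ p : V × (V →SL[starRingEnd 𝕜] 𝕜), p ∈ M ↔ p.1 ∈ Z ∧ p.2 = DD p.1 :=
    fun p => Iff.rfl
  -- evaluation is continuous
  have heval : ∀ x : V, Continuous fun f : V →SL[starRingEnd 𝕜] 𝕜 => f x := by
    intro x
    apply (LipschitzWith.of_dist_le_mul (K := ‖x‖₊) ?_).continuous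
    intro f g
    rw [dist_eq_norm, dist_eq_norm]
    calc ‖f x - g x‖ = ‖(f - g) x‖ := by simp
      _ ≤ ‖f - g‖ * ‖x‖ := (f - g).le_opNorm x
      _ = (‖x‖₊ : ℝ) * ‖f - g‖ := by rw [coe_nnnorm]; ring
  -- M is closed
  have hMclosed : IsClosed (M : Set (V × (V →SL[starRingEnd 𝕜] 𝕜))) := by
    rw [← isSeqClosed_iff_isClosed]
    intro u p hu hup
    have h1 : Filter.Tendsto (fun n => (u n).1) Filter.atTop (nhds p.1) :=
      (continuous_fst.tendsto p).comp hup
    have h2 : Filter.Tendsto (fun n => (u n).2) Filter.atTop (nhds p.2) :=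
      (continuous_snd.tendsto p).comp hup
    have hrel : ∀ r : R, p.2 (r : V) + (starRingEnd 𝕜) (D0 r p.1) = 0 := by
      intro r
      have hc : Filter.Tendsto
          (fun n => (u n).2 (r : V) + (starRingEnd 𝕜) (D0 r ((u n).1)))
          Filter.atTop (nhds (p.2 (r : V) + (starRingEnd 𝕜) (D0 r p.1))) := by
        apply Filter.Tendsto.add
        · exact ((heval (r : V)).tendsto p.2).comp h2
        · have hcont : Continuous fun x : V => (starRingEnd 𝕜) (D0 r x) :=
            RCLike.continuous_conj.comp (D0 r).continuous
          exact (hcont.tendsto p.1).comp h1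
      have hz : ∀ n, (u n).2 (r : V) + (starRingEnd 𝕜) (D0 r ((u n).1)) = 0 := by
        intro n
        rw [(hu n).2]
        exact hDD _ (hZWm _ (hu n).1) r
      have hc0 : Filter.Tendsto (fun _ : ℕ => (0 : 𝕜)) Filter.atTop
          (nhds (p.2 (r : V) + (starRingEnd 𝕜) (D0 r p.1))) := by
        apply hc.congr
        intro n
        rw [hz n]
      exact (tendsto_nhds_unique hc0 tendsto_const_nhds)
    have hpW : p.1 ∈ Wset := by
      rw [hWset]
      exact ⟨p.2, hrel⟩
    have hDDp : DD p.1 = p.2 := hDDuniq _ hpW p.2 hrel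
    have hp1 : p.1 ∈ Z := by
      apply hZclosed (fun n => (u n).1) (fun n => (hu n).1) p.1 hpW
      have t1 : Filter.Tendsto (fun n => ‖(u n).1 - p.1‖) Filter.atTop (nhds 0) :=
        tendsto_iff_norm_sub_tendsto_zero.mp h1
      have t2 : Filter.Tendsto (fun n => ‖(u n).2 - p.2‖) Filter.atTop (nhds 0) :=
        tendsto_iff_norm_sub_tendsto_zero.mp h2
      have := t1.add t2
      simp only [add_zero] at this
      apply this.congr
      intro n
      rw [(hu n).2, hDDp]
    exact ⟨hp1, hDDp.symm⟩
  -- the operator S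
  let AT : V →L[𝕜] V := ATmap 𝒜
  let S : (V × (V →SL[starRingEnd 𝕜] 𝕜)) →L[𝕜] V :=
    (AT.comp (ContinuousLinearMap.fst 𝕜 V (V →SL[starRingEnd 𝕜] 𝕜))) -
      (JL.comp (ContinuousLinearMap.snd 𝕜 V (V →SL[starRingEnd 𝕜] 𝕜)))
  have hSapply : ∀ p : V × (V →SL[starRingEnd 𝕜] 𝕜), S p = AT p.1 - Jfun p.2 := by
    intro p; rfl
  have hSinner : ∀ (p : V × (V →SL[starRingEnd 𝕜] 𝕜)) (v : V),
      ⟪S p, v⟫_𝕜 = 𝒜 v p.1 - (starRingEnd 𝕜) (p.2 v) := by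
    intro p v
    rw [hSapply, inner_sub_left, inner_ATmap, inner_Jfun_left]
  -- lower bound
  set K : ℝ := (α + 1 + ‖AT‖) / α with hKdef
  have hK : ∀ p ∈ M, ‖p‖ ≤ K * ‖S p‖ := by
    rintro ⟨z, f⟩ ⟨hz, hf⟩
    simp only at hz hf
    subst hf
    have h1 : α * ‖z‖ ≤ ‖S (z, DD z)‖ := by
      have hre : α * ‖z‖ ^ 2 ≤ RCLike.re (⟪S (z, DD z), z⟫_𝕜) := by
        rw [hSinner]
        rw [map_sub, RCLike.conj_re]
        have := hcoer z
        have := hZadm z hz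
        simp only at *
        linarith
      have habs : RCLike.re (⟪S (z, DD z), z⟫_𝕜) ≤ ‖S (z, DD z)‖ * ‖z‖ :=
        le_trans (RCLike.re_le_norm _) (norm_inner_le_norm _ _)
      rcases eq_or_lt_of_le (norm_nonneg z) with h0 | h0
      · rw [← h0, mul_zero]
        exact norm_nonneg _
      · have hmul : (α * ‖z‖) * ‖z‖ ≤ ‖S (z, DD z)‖ * ‖z‖ := by nlinarith
        exact le_of_mul_le_mul_right hmul h0
    have h2 : ‖DD z‖ ≤ ‖S (z, DD z)‖ + ‖AT‖ * ‖z‖ := by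
      have hJ : Jfun (DD z) = AT z - S (z, DD z) := by
        rw [hSapply]
        abel
      calc ‖DD z‖ = ‖Jfun (DD z)‖ := (norm_Jfun _).symm
        _ = ‖AT z - S (z, DD z)‖ := by rw [hJ]
        _ ≤ ‖AT z‖ + ‖S (z, DD z)‖ := norm_sub_le _ _
        _ ≤ ‖AT‖ * ‖z‖ + ‖S (z, DD z)‖ := by
            have := AT.le_opNorm z
            linarith
        _ = ‖S (z, DD z)‖ + ‖AT‖ * ‖z‖ := by ring
    rw [Prod.norm_def]
    have hS0 : (0 : ℝ) ≤ ‖S (z, DD z)‖ := norm_nonneg _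
    have hAT0 : (0 : ℝ) ≤ ‖AT‖ := norm_nonneg _
    apply max_le
    · rw [hKdef, div_mul_eq_mul_div, le_div_iff₀ hα]
      nlinarith
    · rw [hKdef, div_mul_eq_mul_div, le_div_iff₀ hα]
      nlinarith [mul_le_mul_of_nonneg_left h1 hAT0]
  -- the functional on M
  obtain ⟨C₀, hC₀⟩ := hLbdd
  set C : ℝ := max C₀ 0 with hCdef
  have hC0 : (0 : ℝ) ≤ C := le_max_right _ _
  let ℓM : M →L[𝕜] 𝕜 := LinearMap.mkContinuous (𝕜 := 𝕜) (𝕜₂ := 𝕜) (E := M) (F := 𝕜) (σ := RingHom.id 𝕜)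
    { toFun := fun m : M => (starRingEnd 𝕜) (L m.val.1)
      map_add' := fun m₁ m₂ => by
        have h := hLadd _ m₁.prop.1 _ m₂.prop.1
        show (starRingEnd 𝕜) (L (m₁.val.1 + m₂.val.1)) =
          (starRingEnd 𝕜) (L m₁.val.1) + (starRingEnd 𝕜) (L m₂.val.1)
        rw [h, map_add]
      map_smul' := fun c m => by
        have h := hLsmul c _ m.prop.1
        show (starRingEnd 𝕜) (L (c • m.val.1)) = c • (starRingEnd 𝕜) (L m.val.1)
        rw [h, map_mul, RCLike.conj_conj, smul_eq_mul] }
    (2 * C) (by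
      intro m
      obtain ⟨hz, hf⟩ := m.prop
      have hb1 : ‖m.val.1‖ ≤ ‖m‖ := norm_fst_le m.val
      have hb2 : ‖m.val.2‖ ≤ ‖m‖ := norm_snd_le m.val
      show ‖(starRingEnd 𝕜) (L m.val.1)‖ ≤ 2 * C * ‖m‖
      rw [RCLike.norm_conj]
      calc ‖L m.val.1‖ ≤ C₀ * (‖m.val.1‖ + ‖DD m.val.1‖) := hC₀ _ hz
        _ = C₀ * (‖m.val.1‖ + ‖m.val.2‖) := by rw [← hf]
        _ ≤ C * (‖m.val.1‖ + ‖m.val.2‖) := by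
            apply mul_le_mul_of_nonneg_right (le_max_left _ _)
            positivity
        _ ≤ C * (‖m‖ + ‖m‖) := by
            apply mul_le_mul_of_nonneg_left _ hC0
            linarith
        _ = 2 * C * ‖m‖ := by ring)
  -- existence
  obtain ⟨v, hv⟩ := exist_aux S M hMclosed K hK ℓM
  constructor
  · refine ⟨v, fun z hz => ?_⟩
    have hm : ((z, DD z) : V × (V →SL[starRingEnd 𝕜] 𝕜)) ∈ M := ⟨hz, rfl⟩
    have h := hv ⟨(z, DD z), hm⟩
    rw [hSinner] at h
    have hℓ : ℓM ⟨(z, DD z), hm⟩ = (starRingEnd 𝕜) (L z) := rfl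
    rw [hℓ, RCLike.conj_conj] at h
    linear_combination h
  -- uniqueness
  · intro hstrong v₁ v₂ h₁ h₂
    set u := v₁ - v₂ with hu_def
    have hu : ∀ z ∈ Z, (starRingEnd 𝕜) (DD z u) = 𝒜 u z := by
      intro z hz
      have e₁ := h₁ z hz
      have e₂ := h₂ z hz
      have hDz : DD z u = DD z v₁ - DD z v₂ := map_sub _ _ _
      have hAz : 𝒜 u z = 𝒜 v₁ z - 𝒜 v₂ z := by
        rw [hu_def, map_sub, ContinuousLinearMap.sub_apply]
      rw [hDz, map_sub, hAz]
      linear_combination e₂ - e₁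
    have hD0r : ∀ r : R, DD (r : V) = D0 r := by
      intro r
      apply hext
      intro r'
      have e₁ := hDD (r : V) (hRW r) r'
      have e₂ := hder r' r
      have e₂' := congrArg (starRingEnd 𝕜) e₂
      simp only [map_add, RCLike.conj_conj, map_zero] at e₂'
      linear_combination e₁ - e₂'
    have huW : ∀ r : R, (-(𝒜 u)) (r : V) + (starRingEnd 𝕜) (D0 r u) = 0 := by
      intro r
      have h := hu (r : V) (hRZ r.2)
      rw [hD0r r] at h
      rw [ContinuousLinearMap.neg_apply]
      linear_combination h
    have huWset : u ∈ Wset := by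
      rw [hWset]
      exact ⟨-(𝒜 u), huW⟩
    have hDDu : DD u = -(𝒜 u) := hDDuniq u huWset _ huW
    have horth : ∀ z ∈ Z, DD u z + (starRingEnd 𝕜) (DD z u) = 0 := by
      intro z hz
      rw [hDDu, hu z hz, ContinuousLinearMap.neg_apply]
      ring
    have hpos := hstrong u huWset horth
    rw [hDDu] at hpos
    have hre : RCLike.re ((-(𝒜 u)) u) = - RCLike.re (𝒜 u u) := by
      rw [ContinuousLinearMap.neg_apply, map_neg]
    rw [hre] at hpos
    have hc := hcoer u
    have h3 : α * ‖u‖ ^ 2 = 0 :=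
      le_antisymm (by linarith) (mul_nonneg hα.le (sq_nonneg _))
    have h4 : ‖u‖ ^ 2 = 0 := by
      rcases mul_eq_zero.mp h3 with h | h
      · exact absurd h hα.ne'
      · exact h
    have h0 : ‖u‖ = 0 := pow_eq_zero_iff two_ne_zero |>.mp h4
    have : u = 0 := norm_eq_zero.mp h0
    rw [hu_def] at this
    exact sub_eq_zero.mp this
end

section
/- With V, R, 𝒟, W, b, a closed admissible subspace Z, coercive 𝒜 ∈ L(V,V'), and L = f + g with f ∈ V' and g a continuous antilinear functional on Z vanishing on R: for u ∈ V, u solves the weak problem (−conj(⟨𝒟z,u⟩) + ⟨𝒜u,z⟩ = ⟨f,z⟩ + ⟨g,z⟩ for all z ∈ Z) if and only if u ∈ W, 𝒟u + 𝒜u = f in V', and b(u,z) = −⟨g,z⟩ for all z ∈ Z. -/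
/-- Theorem 3.9: equivalence of the Weak and Strong Derivation Problems.
Setting as in the derivation framework; `Z` is a closed admissible subspace,
`𝒜 ∈ L(V,V')` coercive, and `L = f + g` with `f ∈ V'` and `g` a continuous
antilinear functional on `Z` (for the `W`-norm) vanishing on `R`.
Then `u ∈ V` solves the weak problem iff `u ∈ W`, `𝒟u + 𝒜u = f` in `V'`,
and `b(u,z) = -⟨g,z⟩` for all `z ∈ Z`. -/
theorem stmt9 {𝕜 V : Type*} [RCLike 𝕜]
    [NormedAddCommGroup V] [InnerProductSpace 𝕜 V] [CompleteSpace V]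
    (R : Submodule 𝕜 V) (hR : Dense (R : Set V))
    (D0 : R →ₗ[𝕜] (V →SL[starRingEnd 𝕜] 𝕜))
    (hder : ∀ u v : R, D0 u (v : V) + (starRingEnd 𝕜) (D0 v (u : V)) = 0)
    (Wset : Set V)
    (hWset : Wset = {v : V | ∃ f : V →SL[starRingEnd 𝕜] 𝕜,
        ∀ r : R, f (r : V) + (starRingEnd 𝕜) (D0 r v) = 0})
    (DD : V → (V →SL[starRingEnd 𝕜] 𝕜))
    (hDD : ∀ v ∈ Wset, ∀ r : R, DD v (r : V) + (starRingEnd 𝕜) (D0 r v) = 0)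
    (Z : Submodule 𝕜 V) (hZW : (Z : Set V) ⊆ Wset) (hRZ : R ≤ Z)
    (hZadm : ∀ z ∈ Z, RCLike.re (DD z z) ≤ 0)
    (hZclosed : ∀ u : ℕ → V, (∀ n, u n ∈ Z) → ∀ v ∈ Wset,
        Filter.Tendsto (fun n => ‖u n - v‖ + ‖DD (u n) - DD v‖)
          Filter.atTop (nhds 0) → v ∈ Z)
    (𝒜 : V →L[𝕜] (V →SL[starRingEnd 𝕜] 𝕜)) (α : ℝ) (hα : 0 < α)
    (hcoer : ∀ u : V, α * ‖u‖ ^ 2 ≤ RCLike.re (𝒜 u u))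
    (f : V →SL[starRingEnd 𝕜] 𝕜) (g : V → 𝕜)
    (hgadd : ∀ z₁ ∈ Z, ∀ z₂ ∈ Z, g (z₁ + z₂) = g z₁ + g z₂)
    (hgsmul : ∀ c : 𝕜, ∀ z ∈ Z, g (c • z) = (starRingEnd 𝕜) c * g z)
    (hgbdd : ∃ C : ℝ, ∀ z ∈ Z, ‖g z‖ ≤ C * (‖z‖ + ‖DD z‖))
    (hgR : ∀ r : R, g (r : V) = 0) :
    ∀ u : V,
      (∀ z ∈ Z, -(starRingEnd 𝕜) (DD z u) + 𝒜 u z = f z + g z) ↔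
      (u ∈ Wset ∧ DD u + 𝒜 u = f ∧
        ∀ z ∈ Z, DD u z + (starRingEnd 𝕜) (DD z u) = -g z) := by
  have hdense : Dense ((Submodule.span 𝕜 (R : Set V) : Submodule 𝕜 V) : Set V) := by
    rwa [Submodule.span_eq]
  -- `DD` agrees with `D0` on `R`
  have hDr : ∀ r : R, DD (r : V) = D0 r := by
    intro r
    apply ContinuousLinearMap.ext_on hdense
    rintro x hx
    have h1 := hDD (r : V) (hZW (hRZ r.2)) ⟨x, hx⟩
    have h2 := hder r ⟨x, hx⟩
    simp only [Submodule.coe_mk] at h1 h2 ⊢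
    linear_combination h1 - h2
  intro u
  constructor
  · intro hw
    have hfr : ∀ r : R, f (r : V) - 𝒜 u (r : V) = -(starRingEnd 𝕜) (D0 r u) := by
      intro r
      have hz := hw (r : V) (hRZ r.2)
      rw [hgR r] at hz
      have hru : (D0 r) u = DD (r : V) u := by rw [hDr r]
      rw [hru]
      linear_combination -hz
    have huW : u ∈ Wset := by
      rw [hWset]
      refine ⟨f - 𝒜 u, fun r => ?_⟩
      have := hfr r
      simp only [ContinuousLinearMap.sub_apply]
      linear_combination this
    have hDu : DD u = f - 𝒜 u := by
      apply ContinuousLinearMap.ext_on hdense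
      rintro x hx
      have h1 := hDD u huW ⟨x, hx⟩
      have h2 := hfr ⟨x, hx⟩
      simp only [ContinuousLinearMap.sub_apply, Submodule.coe_mk] at h1 h2 ⊢
      linear_combination h1 - h2
    refine ⟨huW, ?_, ?_⟩
    · rw [hDu]; abel
    · intro z hz
      have h1 := hw z hz
      have h2 : DD u z = f z - 𝒜 u z := by
        rw [hDu]; simp [ContinuousLinearMap.sub_apply]
      linear_combination h2 - h1
  · rintro ⟨huW, heq, hb⟩ z hz
    have h1 := hb z hz
    have h2 : DD u z + 𝒜 u z = f z := by
      have := DFunLike.congr_fun heq z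
      simpa using this
    linear_combination h2 - h1
end

section
/- Every admissible subspace Z₀ of W is contained in a maximal admissible subspace, and every maximal admissible subspace of W is strongly admissible. -/
/-- A subspace `Z` of the extended domain `Wset` of a derivation is
admissible if it contains `R` and the boundary form
`b(w,w) = 2 Re⟨DD w, w⟩` is `≤ 0` on `Z`. -/
def IsAdmissible {𝕜 V : Type*} [RCLike 𝕜]
    [NormedAddCommGroup V] [InnerProductSpace 𝕜 V]
    (R : Submodule 𝕜 V) (Wset : Set V)
    (DD : V → (V →SL[starRingEnd 𝕜] 𝕜)) (Z : Submodule 𝕜 V) : Prop :=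
  (Z : Set V) ⊆ Wset ∧ R ≤ Z ∧ ∀ w ∈ Z, RCLike.re (DD w w) ≤ 0

/-- Proposition 3.7 (Zorn): every admissible subspace `Z₀` of the extended
domain `W` of a derivation is contained in a maximal admissible subspace,
and every maximal admissible subspace is strongly admissible, i.e.
`b(u,u) ≥ 0` for every `u ∈ W` which is `b`-orthogonal to it
(`b(u,z) = ⟨DD u, z⟩ + conj⟨DD z, u⟩`). -/
theorem stmt10 {𝕜 V : Type*} [RCLike 𝕜]
    [NormedAddCommGroup V] [InnerProductSpace 𝕜 V] [CompleteSpace V]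
    (R : Submodule 𝕜 V) (hR : Dense (R : Set V))
    (D0 : R →ₗ[𝕜] (V →SL[starRingEnd 𝕜] 𝕜))
    (hder : ∀ u v : R, D0 u (v : V) + (starRingEnd 𝕜) (D0 v (u : V)) = 0)
    (Wset : Set V)
    (hWset : Wset = {v : V | ∃ f : V →SL[starRingEnd 𝕜] 𝕜,
        ∀ r : R, f (r : V) + (starRingEnd 𝕜) (D0 r v) = 0})
    (DD : V → (V →SL[starRingEnd 𝕜] 𝕜))
    (hDD : ∀ v ∈ Wset, ∀ r : R, DD v (r : V) + (starRingEnd 𝕜) (D0 r v) = 0) :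
    (∀ Z₀ : Submodule 𝕜 V, IsAdmissible R Wset DD Z₀ →
      ∃ Z₁ : Submodule 𝕜 V, IsAdmissible R Wset DD Z₁ ∧ Z₀ ≤ Z₁ ∧
        ∀ Z₂ : Submodule 𝕜 V, IsAdmissible R Wset DD Z₂ → Z₁ ≤ Z₂ → Z₂ = Z₁) ∧
    (∀ Z₁ : Submodule 𝕜 V, IsAdmissible R Wset DD Z₁ →
      (∀ Z₂ : Submodule 𝕜 V, IsAdmissible R Wset DD Z₂ → Z₁ ≤ Z₂ → Z₂ = Z₁) →
      ∀ u ∈ Wset, (∀ z ∈ Z₁, DD u z + (starRingEnd 𝕜) (DD z u) = 0) →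
        0 ≤ RCLike.re (DD u u)) := by
  -- two continuous maps agreeing on R agree everywhere
  have hext : ∀ f g : V →SL[starRingEnd 𝕜] 𝕜, (∀ r : R, f r = g r) → f = g := by
    intro f g h
    apply ContinuousLinearMap.coeFn_injective
    refine Continuous.ext_on hR f.continuous g.continuous ?_
    intro x hx
    exact h ⟨x, hx⟩
  -- Wset closed under addition and scalar multiplication
  have hWadd : ∀ v ∈ Wset, ∀ v' ∈ Wset, v + v' ∈ Wset := by
    intro v hv v' hv'
    rw [hWset] at hv hv' ⊢
    obtain ⟨f, hf⟩ := hv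
    obtain ⟨g, hg⟩ := hv'
    refine ⟨f + g, fun r => ?_⟩
    have h1 := hf r
    have h2 := hg r
    simp only [ContinuousLinearMap.add_apply, map_add]
    linear_combination h1 + h2
  have hWsmul : ∀ (c : 𝕜), ∀ v ∈ Wset, c • v ∈ Wset := by
    intro c v hv
    rw [hWset] at hv ⊢
    obtain ⟨f, hf⟩ := hv
    refine ⟨c • f, fun r => ?_⟩
    have h1 := hf r
    simp only [ContinuousLinearMap.smul_apply, map_smulₛₗ, map_mul, RingHom.id_apply,
      starRingEnd_self_apply, smul_eq_mul, RCLike.conj_conj]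
    linear_combination c * h1
  -- linearity of DD on Wset
  have hDDadd : ∀ v ∈ Wset, ∀ v' ∈ Wset, DD (v + v') = DD v + DD v' := by
    intro v hv v' hv'
    apply hext
    intro r
    have h1 := hDD v hv r
    have h2 := hDD v' hv' r
    have h3 := hDD (v + v') (hWadd v hv v' hv') r
    simp only [ContinuousLinearMap.add_apply, map_add] at h1 h2 h3 ⊢
    linear_combination h3 - h1 - h2
  have hDDsmul : ∀ (c : 𝕜), ∀ v ∈ Wset, DD (c • v) = c • DD v := by
    intro c v hv
    apply hext
    intro r
    have h1 := hDD v hv r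
    have h3 := hDD (c • v) (hWsmul c v hv) r
    simp only [ContinuousLinearMap.smul_apply, map_smulₛₗ, map_mul,
      starRingEnd_self_apply, smul_eq_mul, RCLike.conj_conj] at h1 h3 ⊢
    linear_combination h3 - c * h1
  constructor
  · -- Zorn
    intro Z₀ hZ₀
    have hchainub : ∀ c ⊆ {Z : Submodule 𝕜 V | IsAdmissible R Wset DD Z},
        IsChain (· ≤ ·) c → ∀ Z ∈ c,
        ∃ ub ∈ {Z : Submodule 𝕜 V | IsAdmissible R Wset DD Z}, ∀ z ∈ c, z ≤ ub := by
      intro c hcs hchain Z hZc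
      refine ⟨sSup c, ?_, fun z hz => le_sSup hz⟩
      have hne : c.Nonempty := ⟨Z, hZc⟩
      have hdir : DirectedOn (· ≤ ·) c := hchain.directedOn
      have hmem : ∀ w ∈ sSup c, ∃ M ∈ c, w ∈ M := fun w hw =>
        (Submodule.mem_sSup_of_directed hne hdir).1 hw
      refine ⟨?_, ?_, ?_⟩
      · intro w hw
        obtain ⟨M, hMc, hwM⟩ := hmem w hw
        exact (hcs hMc).1 hwM
      · exact le_trans (hcs hZc).2.1 (le_sSup hZc)
      · intro w hw
        obtain ⟨M, hMc, hwM⟩ := hmem w hw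
        exact (hcs hMc).2.2 w hwM
    obtain ⟨Z₁, hle, hZ₁, hmax⟩ :=
      zorn_le_nonempty₀ {Z : Submodule 𝕜 V | IsAdmissible R Wset DD Z} hchainub Z₀ hZ₀
    exact ⟨Z₁, hZ₁, hle, fun Z₂ h2 h12 => le_antisymm (hmax h2 h12) h12⟩
  · -- maximal ⇒ strongly admissible
    intro Z₁ hZ₁ hmax u hu hborth
    by_cases hpos : 0 ≤ RCLike.re (DD u u)
    · exact hpos
    push_neg at hpos
    have huu : RCLike.re (DD u u) ≤ 0 := le_of_lt hpos
    set Z₂ : Submodule 𝕜 V := Z₁ ⊔ Submodule.span 𝕜 {u} with hZ₂def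
    have hZ₁W : (Z₁ : Set V) ⊆ Wset := hZ₁.1
    -- every element of Z₂ is z + c • u
    have hrep : ∀ w ∈ Z₂, ∃ z ∈ Z₁, ∃ c : 𝕜, w = z + c • u := by
      intro w hw
      rw [hZ₂def, Submodule.mem_sup] at hw
      obtain ⟨z, hz, y, hy, rfl⟩ := hw
      obtain ⟨c, rfl⟩ := Submodule.mem_span_singleton.1 hy
      exact ⟨z, hz, c, rfl⟩
    have hZ₂adm : IsAdmissible R Wset DD Z₂ := by
      refine ⟨?_, le_trans hZ₁.2.1 le_sup_left, ?_⟩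
      · intro w hw
        obtain ⟨z, hz, c, rfl⟩ := hrep w hw
        exact hWadd z (hZ₁W hz) (c • u) (hWsmul c u hu)
      · intro w hw
        obtain ⟨z, hz, c, rfl⟩ := hrep w hw
        have hzW : z ∈ Wset := hZ₁W hz
        have hcuW : c • u ∈ Wset := hWsmul c u hu
        have e1 : DD (z + c • u) = DD z + c • DD u := by
          rw [hDDadd z hzW (c • u) hcuW, hDDsmul c u hu]
        have e2 : DD (z + c • u) (z + c • u)
            = DD z z + (starRingEnd 𝕜) c * DD z u + c * DD u z
              + c * ((starRingEnd 𝕜) c * DD u u) := by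
          rw [e1]
          simp only [ContinuousLinearMap.add_apply, ContinuousLinearMap.smul_apply,
            map_add, map_smulₛₗ, smul_eq_mul]
          ring
        have horth := hborth z hz
        have hDuz : DD u z = -(starRingEnd 𝕜) (DD z u) :=
          eq_neg_of_add_eq_zero_left horth
        rw [e2, hDuz]
        have key : DD z z + (starRingEnd 𝕜) c * DD z u + c * -(starRingEnd 𝕜) (DD z u)
              + c * ((starRingEnd 𝕜) c * DD u u)
            = DD z z + ((starRingEnd 𝕜) c * DD z u
                - (starRingEnd 𝕜) ((starRingEnd 𝕜) c * DD z u))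
              + c * (starRingEnd 𝕜) c * DD u u := by
          simp only [map_mul, RCLike.conj_conj]
          ring
        rw [key, map_add, map_add, map_sub, RCLike.conj_re, sub_self, add_zero]
        have hlast : RCLike.re (c * (starRingEnd 𝕜) c * DD u u)
            = ‖c‖ ^ 2 * RCLike.re (DD u u) := by
          rw [RCLike.mul_conj, ← RCLike.ofReal_pow, RCLike.re_ofReal_mul]
        rw [hlast]
        have h1 : RCLike.re (DD z z) ≤ 0 := hZ₁.2.2 z hz
        have h2 : ‖c‖ ^ 2 * RCLike.re (DD u u) ≤ 0 :=
          mul_nonpos_of_nonneg_of_nonpos (by positivity) huu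
        linarith
    have heq : Z₂ = Z₁ := hmax Z₂ hZ₂adm le_sup_left
    have huZ : u ∈ Z₁ := by
      rw [← heq]
      exact Submodule.mem_sup_right (Submodule.mem_span_singleton_self u)
    have h0 := hborth u huZ
    have := congrArg RCLike.re h0
    rw [map_add, RCLike.conj_re, map_zero] at this
    linarith
end

section
/- Assume there are a Hilbert space H and operators B₀, B₁ ∈ L(W, H) with b(v,w) = ⟨B₁v, B₁w⟩_H − ⟨B₀v, B₀w⟩_H for all v,w ∈ W and ker B₀ + ker B₁ = W. Then (a) the closures of the ranges of B₀* and B₁* in W intersect only in {0}, and (b) R ⊆ ker B₀ ∩ ker B₁. -/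
lemma closure_range_adjoint_le {𝕜 W H : Type*} [RCLike 𝕜]
    [NormedAddCommGroup W] [InnerProductSpace 𝕜 W] [CompleteSpace W]
    [NormedAddCommGroup H] [InnerProductSpace 𝕜 H] [CompleteSpace H]
    (B : W →L[𝕜] H) :
    (LinearMap.range (ContinuousLinearMap.adjoint B : H →ₗ[𝕜] W)).topologicalClosure ≤
      (LinearMap.ker (B : W →ₗ[𝕜] H))ᗮ := by
  have hle : LinearMap.range (ContinuousLinearMap.adjoint B : H →ₗ[𝕜] W) ≤ (LinearMap.ker (B : W →ₗ[𝕜] H))ᗮ := by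
    rintro _ ⟨y, rfl⟩
    rw [Submodule.mem_orthogonal]
    intro u hu
    rw [ContinuousLinearMap.coe_coe, ContinuousLinearMap.adjoint_inner_right, show B u = 0 from hu, inner_zero_left]
  exact Submodule.topologicalClosure_minimal _ hle (LinearMap.ker (B : W →ₗ[𝕜] H)).isClosed_orthogonal

/-- Lemma 4.3: in the boundary-operator setting (`W` the extended domain of
a derivation, a Hilbert space; `b(v,w) = ⟨B₁v,B₁w⟩_H - ⟨B₀v,B₀w⟩_H` a
boundary form vanishing whenever one argument is in `R`, and
`ker B₀ + ker B₁ = W`): (a) the closures of the ranges of `B₀*` and `B₁*`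
intersect only in `{0}`; (b) `R ⊆ ker B₀ ∩ ker B₁`. -/
theorem stmt11 {𝕜 W H : Type*} [RCLike 𝕜]
    [NormedAddCommGroup W] [InnerProductSpace 𝕜 W] [CompleteSpace W]
    [NormedAddCommGroup H] [InnerProductSpace 𝕜 H] [CompleteSpace H]
    (B₀ B₁ : W →L[𝕜] H) (R : Submodule 𝕜 W)
    (hRb : ∀ r ∈ R, ∀ w : W,
      (inner 𝕜 (B₁ w) (B₁ r) : 𝕜) - inner 𝕜 (B₀ w) (B₀ r) = 0)
    (hker : LinearMap.ker (B₀ : W →ₗ[𝕜] H) ⊔ LinearMap.ker (B₁ : W →ₗ[𝕜] H) = ⊤) :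
    ((LinearMap.range (ContinuousLinearMap.adjoint B₀ : H →ₗ[𝕜] W)).topologicalClosure ⊓
        (LinearMap.range (ContinuousLinearMap.adjoint B₁ : H →ₗ[𝕜] W)).topologicalClosure = ⊥) ∧
      R ≤ LinearMap.ker (B₀ : W →ₗ[𝕜] H) ⊓ LinearMap.ker (B₁ : W →ₗ[𝕜] H) := by
  constructor
  · refine le_antisymm ?_ bot_le
    calc (LinearMap.range (ContinuousLinearMap.adjoint B₀ : H →ₗ[𝕜] W)).topologicalClosure ⊓
        (LinearMap.range (ContinuousLinearMap.adjoint B₁ : H →ₗ[𝕜] W)).topologicalClosure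
        ≤ (LinearMap.ker (B₀ : W →ₗ[𝕜] H))ᗮ ⊓ (LinearMap.ker (B₁ : W →ₗ[𝕜] H))ᗮ :=
          inf_le_inf (closure_range_adjoint_le B₀) (closure_range_adjoint_le B₁)
      _ = (LinearMap.ker (B₀ : W →ₗ[𝕜] H) ⊔ LinearMap.ker (B₁ : W →ₗ[𝕜] H))ᗮ :=
          Submodule.inf_orthogonal _ _
      _ = (⊤ : Submodule 𝕜 W)ᗮ := by rw [hker]
      _ = ⊥ := Submodule.top_orthogonal_eq_bot
  · intro r hr
    obtain ⟨u, hu, v, hv, huv⟩ : ∃ u ∈ LinearMap.ker (B₀ : W →ₗ[𝕜] H), ∃ v ∈ LinearMap.ker (B₁ : W →ₗ[𝕜] H),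
        u + v = r := by
      have : r ∈ LinearMap.ker (B₀ : W →ₗ[𝕜] H) ⊔ LinearMap.ker (B₁ : W →ₗ[𝕜] H) := by rw [hker]; trivial
      exact Submodule.mem_sup.mp this
    rw [LinearMap.mem_ker, ContinuousLinearMap.coe_coe] at hu hv
    have h1 : (inner 𝕜 (B₁ u) (B₁ r) : 𝕜) = 0 := by
      have := hRb r hr u
      rwa [hu, inner_zero_left, sub_zero] at this
    have h2 : (inner 𝕜 (B₀ v) (B₀ r) : 𝕜) = 0 := by
      have := hRb r hr v
      rwa [hv, inner_zero_left, zero_sub, neg_eq_zero] at this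
    have hB0 : B₀ r = 0 := by
      have h : (inner 𝕜 (B₀ r) (B₀ r) : 𝕜) = 0 := by
        have e : (inner 𝕜 (B₀ r) (B₀ r) : 𝕜)
            = inner 𝕜 (B₀ u) (B₀ r) + inner 𝕜 (B₀ v) (B₀ r) := by
          rw [← inner_add_left, ← map_add, huv]
        rw [e, hu, inner_zero_left, zero_add, h2]
      exact inner_self_eq_zero.mp h
    have hB1 : B₁ r = 0 := by
      have h : (inner 𝕜 (B₁ r) (B₁ r) : 𝕜) = 0 := by
        have e : (inner 𝕜 (B₁ r) (B₁ r) : 𝕜)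
            = inner 𝕜 (B₁ u) (B₁ r) + inner 𝕜 (B₁ v) (B₁ r) := by
          rw [← inner_add_left, ← map_add, huv]
        rw [e, hv, inner_zero_left, add_zero, h1]
      exact inner_self_eq_zero.mp h
    exact Submodule.mem_inf.mpr ⟨hB0, hB1⟩
end

section
/- Under the boundary-operator assumption (b(v,w) = ⟨B₁v,B₁w⟩ − ⟨B₀v,B₀w⟩ and ker B₀ + ker B₁ = W), the subspace ker B₁ is a maximal admissible subspace of W. -/
/-- Proposition 4.4: in the boundary-operator setting
(`b(v,w) = ⟨B₁v,B₁w⟩_H - ⟨B₀v,B₀w⟩_H` vanishes when one argument is in `R`,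
and `ker B₀ + ker B₁ = W`), the subspace `ker B₁` is maximal admissible,
where `Z` is admissible iff `R ⊆ Z` and `b(w,w) ≤ 0` (i.e.
`‖B₁w‖ ≤ ‖B₀w‖`) for all `w ∈ Z`. -/
theorem stmt12 {𝕜 W H : Type*} [RCLike 𝕜]
    [NormedAddCommGroup W] [InnerProductSpace 𝕜 W] [CompleteSpace W]
    [NormedAddCommGroup H] [InnerProductSpace 𝕜 H] [CompleteSpace H]
    (B₀ B₁ : W →L[𝕜] H) (R : Submodule 𝕜 W)
    (hRb : ∀ r ∈ R, ∀ w : W,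
      (inner 𝕜 (B₁ w) (B₁ r) : 𝕜) - inner 𝕜 (B₀ w) (B₀ r) = 0)
    (hker : LinearMap.ker (B₀ : W →ₗ[𝕜] H) ⊔ LinearMap.ker (B₁ : W →ₗ[𝕜] H) = ⊤) :
    (R ≤ LinearMap.ker (B₁ : W →ₗ[𝕜] H) ∧ ∀ w ∈ LinearMap.ker (B₁ : W →ₗ[𝕜] H), ‖B₁ w‖ ≤ ‖B₀ w‖) ∧
    ∀ Z : Submodule 𝕜 W, (R ≤ Z ∧ ∀ w ∈ Z, ‖B₁ w‖ ≤ ‖B₀ w‖) →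
      LinearMap.ker (B₁ : W →ₗ[𝕜] H) ≤ Z → Z = LinearMap.ker (B₁ : W →ₗ[𝕜] H) := by
  refine ⟨⟨?_, ?_⟩, ?_⟩
  · -- R ≤ ker B₁
    intro r hr
    obtain ⟨u, hu, v, hv, huv⟩ := Submodule.mem_sup.mp
      (hker ▸ Submodule.mem_top : r ∈ LinearMap.ker (B₀ : W →ₗ[𝕜] H) ⊔ LinearMap.ker (B₁ : W →ₗ[𝕜] H))
    have hu0 : B₀ u = 0 := hu
    have hv0 : B₁ v = 0 := hv
    have h1 : B₁ r = B₁ u := by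
      rw [← huv, map_add, hv0, add_zero]
    have h2 : (inner 𝕜 (B₁ r) (B₁ r) : 𝕜) = 0 := by
      nth_rewrite 1 [h1]
      have := hRb r hr u
      rw [hu0, inner_zero_left, sub_zero] at this
      exact this
    exact inner_self_eq_zero.mp h2
  · intro w hw
    have : B₁ w = 0 := hw
    simp [this]
  · intro Z ⟨hRZ, hZ⟩ hkZ
    refine le_antisymm (fun z hz => ?_) hkZ
    obtain ⟨u, hu, v, hv, huv⟩ := Submodule.mem_sup.mp
      (hker ▸ Submodule.mem_top : z ∈ LinearMap.ker (B₀ : W →ₗ[𝕜] H) ⊔ LinearMap.ker (B₁ : W →ₗ[𝕜] H))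
    have hvZ : v ∈ Z := hkZ hv
    have huZ : u ∈ Z := by
      have : u = z - v := by rw [← huv]; abel
      rw [this]; exact Z.sub_mem hz hvZ
    have hu0 : B₀ u = 0 := hu
    have hB1u : ‖B₁ u‖ ≤ 0 := by simpa [hu0] using hZ u huZ
    have hB1u0 : B₁ u = 0 := by
      rw [← norm_eq_zero]; exact le_antisymm hB1u (norm_nonneg _)
    show B₁ z = 0
    rw [← huv, map_add, hB1u0, (show B₁ v = 0 from hv), add_zero]
end

section
/- Under the boundary-operator assumption (b(v,w) = ⟨B₁v,B₁w⟩_H − ⟨B₀v,B₀w⟩_H, ker B₀ + ker B₁ = W, where b is the boundary form of a derivation), the ranges Ran B₀ and Ran B₁ are closed subspaces of H. -/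
open scoped ComplexConjugate
open Filter Topology

noncomputable section

variable {𝕜 V : Type*} [RCLike 𝕜] [NormedAddCommGroup V] [InnerProductSpace 𝕜 V]

def innerCLM (e : V) : V →SL[starRingEnd 𝕜] 𝕜 :=
  LinearMap.mkContinuous
    { toFun := fun x => (inner 𝕜 x e : 𝕜)
      map_add' := fun x y => inner_add_left x y e
      map_smul' := fun c x => inner_smul_left x e c }
    ‖e‖ fun x => by
      simpa [mul_comm] using norm_inner_le_norm (𝕜 := 𝕜) x e

@[simp] lemma innerCLM_apply (e x : V) : (innerCLM (𝕜 := 𝕜) e) x = (inner 𝕜 x e : 𝕜) := rfl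

variable [CompleteSpace V]

def dRep (f : V →SL[starRingEnd 𝕜] 𝕜) : V :=
  (InnerProductSpace.toDual 𝕜 V).symm
    (LinearMap.mkContinuous
      { toFun := fun x => conj (f x)
        map_add' := fun x y => by simp
        map_smul' := fun c x => by
          simp [ContinuousLinearMap.map_smulₛₗ, mul_comm] }
      ‖f‖ fun x => by simpa using f.le_opNorm x)

lemma dRep_spec (f : V →SL[starRingEnd 𝕜] 𝕜) (x : V) :
    f x = (inner 𝕜 x (dRep f) : 𝕜) := by
  have h := InnerProductSpace.toDual_symm_apply (𝕜 := 𝕜) (E := V)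
    (y := (LinearMap.mkContinuous
      { toFun := fun x => conj (f x)
        map_add' := fun x y => by simp
        map_smul' := fun c x => by
          simp [ContinuousLinearMap.map_smulₛₗ, mul_comm] }
      ‖f‖ fun x => by simpa using f.le_opNorm x)) (x := x)
  rw [show (inner 𝕜 x (dRep f) : 𝕜) = conj (inner 𝕜 (dRep f) x : 𝕜) from (inner_conj_symm _ _).symm]
  rw [dRep, h]
  simp

end

set_option maxHeartbeats 2000000 in
theorem master {𝕜 V H : Type*} [RCLike 𝕜]
    [NormedAddCommGroup V] [InnerProductSpace 𝕜 V] [CompleteSpace V]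
    [NormedAddCommGroup H] [InnerProductSpace 𝕜 H] [CompleteSpace H]
    (R : Submodule 𝕜 V) (hR : Dense (R : Set V))
    (D0 : R →ₗ[𝕜] (V →SL[starRingEnd 𝕜] 𝕜))
    (hder : ∀ u v : R, D0 u (v : V) + (starRingEnd 𝕜) (D0 v (u : V)) = 0)
    (Wset : Set V)
    (hWset : Wset = {v : V | ∃ f : V →SL[starRingEnd 𝕜] 𝕜,
        ∀ r : R, f (r : V) + (starRingEnd 𝕜) (D0 r v) = 0})
    (DD : V → (V →SL[starRingEnd 𝕜] 𝕜))
    (hDD : ∀ v ∈ Wset, ∀ r : R, DD v (r : V) + (starRingEnd 𝕜) (D0 r v) = 0)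
    (B₀ B₁ : V → H)
    (hB₀lin : ∀ v ∈ Wset, ∀ w ∈ Wset, ∀ c : 𝕜,
        B₀ (v + w) = B₀ v + B₀ w ∧ B₀ (c • v) = c • B₀ v)
    (hB₁lin : ∀ v ∈ Wset, ∀ w ∈ Wset, ∀ c : 𝕜,
        B₁ (v + w) = B₁ v + B₁ w ∧ B₁ (c • v) = c • B₁ v)
    (hB₀bdd : ∃ C : ℝ, ∀ v ∈ Wset, ‖B₀ v‖ ≤ C * (‖v‖ + ‖DD v‖))
    (hB₁bdd : ∃ C : ℝ, ∀ v ∈ Wset, ‖B₁ v‖ ≤ C * (‖v‖ + ‖DD v‖))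
    (hfact : ∀ v ∈ Wset, ∀ w ∈ Wset,
        DD v w + (starRingEnd 𝕜) (DD w v) =
          (inner 𝕜 (B₁ w) (B₁ v) : 𝕜) - inner 𝕜 (B₀ w) (B₀ v))
    (hker : ∀ w ∈ Wset, ∃ w₀ ∈ Wset, ∃ w₁ ∈ Wset,
        B₀ w₀ = 0 ∧ B₁ w₁ = 0 ∧ w = w₀ + w₁) :
    IsClosed (B₀ '' Wset) := by
  classical
  set d : V → V := fun v => dRep (DD v) with hd_def
  have hd : ∀ v x, DD v x = (inner 𝕜 x (d v) : 𝕜) := fun v x => dRep_spec (DD v) x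
  -- membership characterization
  have hWiff : ∀ v : V, v ∈ Wset ↔ ∃ f : V →SL[starRingEnd 𝕜] 𝕜,
      ∀ r : R, f (r : V) + conj (D0 r v) = 0 := by
    intro v; rw [hWset]; exact Iff.rfl
  -- uniqueness by density
  have huniq : ∀ f g : V →SL[starRingEnd 𝕜] 𝕜, (∀ r : R, f r = g r) → f = g := by
    intro f g h
    have hfg : ⇑f = ⇑g :=
      Continuous.ext_on hR f.continuous g.continuous (fun x hx => h ⟨x, hx⟩)
    exact ContinuousLinearMap.ext fun x => congrFun hfg x
  -- DD determined on R
  have hDDr : ∀ v ∈ Wset, ∀ r : R, DD v (r : V) = -conj (D0 r v) := by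
    intro v hv r
    have := hDD v hv r
    linear_combination this
  -- subspace properties of Wset
  have hWadd : ∀ v ∈ Wset, ∀ w ∈ Wset, v + w ∈ Wset := by
    intro v hv w hw
    obtain ⟨f, hf⟩ := (hWiff v).1 hv
    obtain ⟨g, hg⟩ := (hWiff w).1 hw
    refine (hWiff _).2 ⟨f + g, fun r => ?_⟩
    have h1 := hf r; have h2 := hg r
    simp only [ContinuousLinearMap.add_apply, map_add, map_add (D0 r)]
    linear_combination h1 + h2
  have hWsmul : ∀ v ∈ Wset, ∀ c : 𝕜, c • v ∈ Wset := by
    intro v hv c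
    obtain ⟨f, hf⟩ := (hWiff v).1 hv
    refine (hWiff _).2 ⟨c • f, fun r => ?_⟩
    have h1 := hf r
    have h2 : D0 r (c • v) = conj c * D0 r v := by
      simpa using (D0 r).map_smulₛₗ c v
    rw [h2]
    simp only [ContinuousLinearMap.smul_apply, smul_eq_mul, map_mul, RCLike.conj_conj]
    linear_combination c * h1
  have hWzero : (0 : V) ∈ Wset := by
    refine (hWiff _).2 ⟨0, fun r => ?_⟩
    simp
  have hWneg : ∀ v ∈ Wset, -v ∈ Wset := by
    intro v hv
    have := hWsmul v hv (-1)
    rwa [neg_one_smul] at this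
  have hWsub : ∀ v ∈ Wset, ∀ w ∈ Wset, v - w ∈ Wset := by
    intro v hv w hw
    simpa [sub_eq_add_neg] using hWadd v hv (-w) (hWneg w hw)
  -- linearity of DD on Wset
  have hDDadd : ∀ v ∈ Wset, ∀ w ∈ Wset, DD (v + w) = DD v + DD w := by
    intro v hv w hw
    apply huniq
    intro r
    rw [hDDr _ (hWadd v hv w hw) r]
    simp only [ContinuousLinearMap.add_apply]
    rw [hDDr v hv r, hDDr w hw r, (D0 r).map_add]
    simp [map_add]
    ring
  have hDDsmul : ∀ v ∈ Wset, ∀ c : 𝕜, DD (c • v) = c • DD v := by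
    intro v hv c
    apply huniq
    intro r
    rw [hDDr _ (hWsmul v hv c) r]
    have h2 : D0 r (c • v) = conj c * D0 r v := by
      simpa using (D0 r).map_smulₛₗ c v
    rw [h2]
    simp only [ContinuousLinearMap.smul_apply, smul_eq_mul, map_mul, RCLike.conj_conj]
    rw [hDDr v hv r]
    ring
  have hDDsub : ∀ v ∈ Wset, ∀ w ∈ Wset, DD (v - w) = DD v - DD w := by
    intro v hv w hw
    have h1 := hDDadd w hw (v - w) (hWsub v hv w hw)
    rw [add_sub_cancel] at h1
    rw [h1]; abel
  -- linearity of d on Wset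
  have hdadd : ∀ v ∈ Wset, ∀ w ∈ Wset, d (v + w) = d v + d w := by
    intro v hv w hw
    apply ext_inner_left 𝕜
    intro x
    rw [← hd, hDDadd v hv w hw, inner_add_right, ← hd, ← hd]
    rfl
  have hdsub : ∀ v ∈ Wset, ∀ w ∈ Wset, d (v - w) = d v - d w := by
    intro v hv w hw
    apply ext_inner_left 𝕜
    intro x
    rw [← hd, hDDsub v hv w hw, inner_sub_right, ← hd, ← hd]
    rfl
  have hdsmul : ∀ v ∈ Wset, ∀ c : 𝕜, d (c • v) = c • d v := by
    intro v hv c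
    apply ext_inner_left 𝕜
    intro x
    rw [← hd, hDDsmul v hv c, inner_smul_right, ← hd]
    rfl
  have hdzero : d 0 = 0 := by
    have h0 : DD (0 : V) = 0 := by
      apply huniq
      intro r
      rw [hDDr _ hWzero r]
      simp
    apply ext_inner_left 𝕜
    intro x
    rw [← hd, h0]
    simp
  -- norm comparison
  have hDDnorm : ∀ v : V, ‖DD v‖ ≤ ‖d v‖ := by
    intro v
    refine ContinuousLinearMap.opNorm_le_bound _ (norm_nonneg _) (fun x => ?_)
    rw [hd]
    exact (norm_inner_le_norm x (d v)).trans (le_of_eq (mul_comm _ _))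
  -- boundedness of B₀, B₁ with nonneg constant and d
  have hBbdd' : ∀ (B : V → H), (∃ C : ℝ, ∀ v ∈ Wset, ‖B v‖ ≤ C * (‖v‖ + ‖DD v‖)) →
      ∃ C : ℝ, 0 ≤ C ∧ ∀ v ∈ Wset, ‖B v‖ ≤ C * (‖v‖ + ‖d v‖) := by
    rintro B ⟨C, hC⟩
    refine ⟨|C|, abs_nonneg _, fun v hv => ?_⟩
    calc ‖B v‖ ≤ C * (‖v‖ + ‖DD v‖) := hC v hv
    _ ≤ |C| * (‖v‖ + ‖DD v‖) := by
        apply mul_le_mul_of_nonneg_right (le_abs_self C)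
        positivity
    _ ≤ |C| * (‖v‖ + ‖d v‖) := by
        apply mul_le_mul_of_nonneg_left _ (abs_nonneg C)
        exact add_le_add le_rfl (hDDnorm v)
  obtain ⟨C₀, hC₀0, hC₀⟩ := hBbdd' B₀ hB₀bdd
  obtain ⟨C₁, hC₁0, hC₁⟩ := hBbdd' B₁ hB₁bdd
  -- B₀/B₁ additivity conveniences
  have hB₀zero : B₀ 0 = 0 := by
    have := (hB₀lin 0 hWzero 0 hWzero 0).2
    simpa using this
  have hB₁zero : B₁ 0 = 0 := by
    have := (hB₁lin 0 hWzero 0 hWzero 0).2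
    simpa using this
  have hB₀sub : ∀ v ∈ Wset, ∀ w ∈ Wset, B₀ (v - w) = B₀ v - B₀ w := by
    intro v hv w hw
    have hneg : B₀ (-w) = -B₀ w := by
      have := (hB₀lin w hw w hw (-1)).2
      rwa [neg_one_smul, neg_one_smul] at this
    have := (hB₀lin v hv (-w) (hWneg w hw) 0).1
    rw [← sub_eq_add_neg] at this
    rw [this, hneg, sub_eq_add_neg]
  have hB₁sub : ∀ v ∈ Wset, ∀ w ∈ Wset, B₁ (v - w) = B₁ v - B₁ w := by
    intro v hv w hw
    have hneg : B₁ (-w) = -B₁ w := by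
      have := (hB₁lin w hw w hw (-1)).2
      rwa [neg_one_smul, neg_one_smul] at this
    have := (hB₁lin v hv (-w) (hWneg w hw) 0).1
    rw [← sub_eq_add_neg] at this
    rw [this, hneg, sub_eq_add_neg]
  -- graph closedness
  have hgraph : ∀ (u : ℕ → V) (v e : V), (∀ n, u n ∈ Wset) →
      Tendsto u atTop (nhds v) → Tendsto (fun n => d (u n)) atTop (nhds e) →
      v ∈ Wset ∧ d v = e := by
    intro u v e hu huv hue
    have hlim : ∀ r : R, (innerCLM (𝕜 := 𝕜) e) (r : V) + conj (D0 r v) = 0 := by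
      intro r
      have h1 : Tendsto (fun n => (inner 𝕜 (r : V) (d (u n)) : 𝕜) + conj (D0 r (u n)))
          atTop (nhds ((inner 𝕜 (r : V) e : 𝕜) + conj (D0 r v))) := by
        apply Tendsto.add
        · exact (Tendsto.inner tendsto_const_nhds hue)
        · have : Tendsto (fun n => D0 r (u n)) atTop (nhds (D0 r v)) :=
            ((D0 r).continuous.tendsto v).comp huv
          exact (RCLike.continuous_conj.tendsto _).comp this
      have h2 : ∀ n, (inner 𝕜 (r : V) (d (u n)) : 𝕜) + conj (D0 r (u n)) = 0 := by
        intro n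
        rw [← hd]
        exact hDD (u n) (hu n) r
      have h3 : Tendsto (fun _ : ℕ => (0 : 𝕜)) atTop (nhds ((inner 𝕜 (r : V) e : 𝕜) + conj (D0 r v))) := by
        simpa [h2] using h1
      have := tendsto_nhds_unique h3 tendsto_const_nhds
      simpa using this
    have hvW : v ∈ Wset := (hWiff v).2 ⟨innerCLM e, hlim⟩
    refine ⟨hvW, ?_⟩
    have hDDv : DD v = innerCLM (𝕜 := 𝕜) e := by
      apply huniq
      intro r
      rw [hDDr v hvW r]
      have := hlim r
      rw [innerCLM_apply] at this ⊢
      linear_combination -this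
    apply ext_inner_left 𝕜
    intro x
    rw [← hd, hDDv, innerCLM_apply]
  -- R is contained in Wset
  have hRW : ∀ r : R, (r : V) ∈ Wset := by
    intro r
    refine (hWiff _).2 ⟨D0 r, fun r' => ?_⟩
    exact hder r r'
  have hDr : ∀ r : R, DD (r : V) = D0 r := by
    intro r
    apply huniq
    intro r'
    rw [hDDr _ (hRW r) r']
    have := hder r r'
    linear_combination -this
  -- B₀ and B₁ vanish on R
  have hbr : ∀ r : R, ∀ w ∈ Wset, (inner 𝕜 (B₁ w) (B₁ (r : V)) : 𝕜) = inner 𝕜 (B₀ w) (B₀ (r : V)) := by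
    intro r w hw
    have h := hfact (r : V) (hRW r) w hw
    rw [hDr r] at h
    rw [hDDr w hw r] at h
    rw [map_neg, RCLike.conj_conj] at h
    rw [add_neg_cancel] at h
    linear_combination -h
  have hB₀r : ∀ r : R, B₀ (r : V) = 0 := by
    intro r
    obtain ⟨r₀, hr₀W, r₁, hr₁W, hr₀, hr₁, hsum⟩ := hker (r : V) (hRW r)
    have hBr : B₀ (r : V) = B₀ r₁ := by
      rw [hsum, (hB₀lin r₀ hr₀W r₁ hr₁W 0).1, hr₀, zero_add]
    have h := hbr r r₁ hr₁W
    rw [hr₁, inner_zero_left, ← hBr] at h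
    exact inner_self_eq_zero.mp h.symm
  have hB₁r : ∀ r : R, B₁ (r : V) = 0 := by
    intro r
    obtain ⟨r₀, hr₀W, r₁, hr₁W, hr₀, hr₁, hsum⟩ := hker (r : V) (hRW r)
    have hBr : B₁ (r : V) = B₁ r₀ := by
      rw [hsum, (hB₁lin r₀ hr₀W r₁ hr₁W 0).1, hr₁, add_zero]
    have h := hbr r r₀ hr₀W
    rw [hr₀, inner_zero_left, ← hBr] at h
    exact inner_self_eq_zero.mp h
  -- energy identity
  have hre : ∀ v ∈ Wset, 2 * RCLike.re (inner 𝕜 v (d v) : 𝕜) = ‖B₁ v‖ ^ 2 - ‖B₀ v‖ ^ 2 := by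
    intro v hv
    have h := hfact v hv v hv
    rw [hd] at h
    rw [RCLike.add_conj] at h
    rw [inner_self_eq_norm_sq_to_K, inner_self_eq_norm_sq_to_K] at h
    have h2 : ((2 * RCLike.re (inner 𝕜 v (d v) : 𝕜) : ℝ) : 𝕜)
        = ((‖B₁ v‖ ^ 2 - ‖B₀ v‖ ^ 2 : ℝ) : 𝕜) := by
      push_cast
      linear_combination h
    exact_mod_cast h2
  -- norm expansion
  have hexp : ∀ v ∈ Wset, ‖v + d v‖ ^ 2 = ‖v‖ ^ 2 + ‖d v‖ ^ 2 + (‖B₁ v‖ ^ 2 - ‖B₀ v‖ ^ 2) := by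
    intro v hv
    rw [norm_add_sq (𝕜 := 𝕜), hre v hv]
    ring
  -- the range space M = {u + d u : u ∈ ker B₀ ∩ W}
  set Mset : Set V := {g | ∃ u, (u ∈ Wset ∧ B₀ u = 0) ∧ g = u + d u} with hMset_def
  have hMclosed : IsClosed Mset := by
    apply IsSeqClosed.isClosed
    intro g L hg hgL
    choose u hu hgu using hg
    have hbound : ∀ n m : ℕ, ‖u n - u m‖ ≤ ‖g n - g m‖ ∧ ‖d (u n) - d (u m)‖ ≤ ‖g n - g m‖ := by
      intro n m
      have hz : u n - u m ∈ Wset := hWsub _ (hu n).1 _ (hu m).1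
      have hz0 : B₀ (u n - u m) = 0 := by
        rw [hB₀sub _ (hu n).1 _ (hu m).1, (hu n).2, (hu m).2, sub_zero]
      have he := hexp _ hz
      rw [hz0] at he
      simp only [norm_zero] at he
      have hgz : (u n - u m) + d (u n - u m) = g n - g m := by
        rw [hdsub _ (hu n).1 _ (hu m).1, hgu n, hgu m]
        abel
      rw [hgz] at he
      constructor
      · rw [← pow_le_pow_iff_left₀ (norm_nonneg _) (norm_nonneg _) (two_ne_zero)]
        rw [he, hdsub _ (hu n).1 _ (hu m).1]
        nlinarith [sq_nonneg (‖B₁ (u n - u m)‖), sq_nonneg (‖d (u n) - d (u m)‖)]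
      · rw [← pow_le_pow_iff_left₀ (norm_nonneg _) (norm_nonneg _) (two_ne_zero)]
        rw [he, hdsub _ (hu n).1 _ (hu m).1]
        nlinarith [sq_nonneg (‖B₁ (u n - u m)‖), sq_nonneg (‖u n - u m‖)]
    have hgC : CauchySeq g := hgL.cauchySeq
    have hcu : CauchySeq u := by
      rw [Metric.cauchySeq_iff] at hgC ⊢
      intro ε hε
      obtain ⟨N, hN⟩ := hgC ε hε
      refine ⟨N, fun n hn m hm => ?_⟩
      have := hN n hn m hm
      rw [dist_eq_norm] at this ⊢
      exact lt_of_le_of_lt (hbound n m).1 this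
    have hcd : CauchySeq (fun n => d (u n)) := by
      rw [Metric.cauchySeq_iff] at hgC ⊢
      intro ε hε
      obtain ⟨N, hN⟩ := hgC ε hε
      refine ⟨N, fun n hn m hm => ?_⟩
      have := hN n hn m hm
      rw [dist_eq_norm] at this ⊢
      exact lt_of_le_of_lt (hbound n m).2 this
    obtain ⟨uL, huL⟩ := cauchySeq_tendsto_of_complete hcu
    obtain ⟨eL, heL⟩ := cauchySeq_tendsto_of_complete hcd
    obtain ⟨huLW, hduL⟩ := hgraph u uL eL (fun n => (hu n).1) huL heL
    have hzero : Tendsto (fun n => C₀ * (‖uL - u n‖ + ‖d uL - d (u n)‖)) atTop (nhds 0) := by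
      have h1 : Tendsto (fun n => uL - u n) atTop (nhds 0) := by
        simpa using huL.const_sub uL
      have h2 : Tendsto (fun n => d uL - d (u n)) atTop (nhds 0) := by
        rw [hduL]
        simpa using heL.const_sub eL
      have := ((h1.norm).add (h2.norm)).const_mul C₀
      simpa using this
    have hB₀uL : B₀ uL = 0 := by
      rw [← norm_le_zero_iff]
      refine ge_of_tendsto' hzero (fun n => ?_)
      have h1 : B₀ uL = B₀ (uL - u n) := by
        rw [hB₀sub _ huLW _ (hu n).1, (hu n).2, sub_zero]
      rw [h1]
      calc ‖B₀ (uL - u n)‖ ≤ C₀ * (‖uL - u n‖ + ‖d (uL - u n)‖) :=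
            hC₀ _ (hWsub _ huLW _ (hu n).1)
      _ = C₀ * (‖uL - u n‖ + ‖d uL - d (u n)‖) := by
            rw [hdsub _ huLW _ (hu n).1]
    have hLg : L = uL + d uL := by
      have h1 : Tendsto g atTop (nhds (uL + eL)) := by
        have := huL.add heL
        apply Tendsto.congr _ this
        intro n
        exact (hgu n).symm
      rw [hduL]
      exact tendsto_nhds_unique hgL h1
    exact ⟨uL, ⟨huLW, hB₀uL⟩, hLg⟩
  -- surjectivity of u ↦ u + d u on ker B₀ ∩ W
  have hMtop : ∀ g : V, ∃ u, (u ∈ Wset ∧ B₀ u = 0) ∧ g = u + d u := by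
    set Msub : Submodule 𝕜 V :=
      { carrier := Mset
        add_mem' := by
          rintro a b ⟨ua, ⟨hua, hua0⟩, rfl⟩ ⟨ub, ⟨hub, hub0⟩, rfl⟩
          refine ⟨ua + ub, ⟨hWadd _ hua _ hub, ?_⟩, ?_⟩
          · rw [(hB₀lin _ hua _ hub 0).1, hua0, hub0, add_zero]
          · rw [hdadd _ hua _ hub]
            abel
        zero_mem' := ⟨0, ⟨hWzero, hB₀zero⟩, by rw [hdzero, add_zero]⟩
        smul_mem' := by
          rintro c a ⟨ua, ⟨hua, hua0⟩, rfl⟩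
          refine ⟨c • ua, ⟨hWsmul _ hua c, ?_⟩, ?_⟩
          · rw [(hB₀lin _ hua _ hua c).2, hua0, smul_zero]
          · rw [hdsmul _ hua c, smul_add] } with hMsub_def
    have hMsubClosed : IsClosed (Msub : Set V) := hMclosed
    haveI : CompleteSpace Msub := hMsubClosed.completeSpace_coe
    have htop : Msub = ⊤ := by
      rw [← Submodule.orthogonal_eq_bot_iff]
      rw [Submodule.eq_bot_iff]
      intro p hp
      rw [Submodule.mem_orthogonal] at hp
      have hZp : ∀ u, u ∈ Wset → B₀ u = 0 → (inner 𝕜 (u + d u) p : 𝕜) = 0 := by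
        intro u h1 h2
        exact hp _ ⟨u, ⟨h1, h2⟩, rfl⟩
      have hRp : ∀ r : R, (inner 𝕜 (r : V) p : 𝕜) + (inner 𝕜 (d (r : V)) p : 𝕜) = 0 := by
        intro r
        have := hZp (r : V) (hRW r) (hB₀r r)
        rw [inner_add_left] at this
        exact this
      have hpW : p ∈ Wset := by
        refine (hWiff p).2 ⟨innerCLM p, fun r => ?_⟩
        have hconj : conj (D0 r p) = (inner 𝕜 (d (r : V)) p : 𝕜) := by
          rw [show ((D0 r) p : 𝕜) = DD (r : V) p from by rw [hDr r], hd]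
          exact inner_conj_symm _ _
        rw [innerCLM_apply, hconj]
        exact hRp r
      have hdp : d p = p := by
        have hDDp : DD p = innerCLM (𝕜 := 𝕜) p := by
          apply huniq
          intro r
          rw [hDDr p hpW r, innerCLM_apply]
          have hconj : conj (D0 r p) = (inner 𝕜 (d (r : V)) p : 𝕜) := by
            rw [show ((D0 r) p : 𝕜) = DD (r : V) p from by rw [hDr r], hd]
            exact inner_conj_symm _ _
          rw [hconj]
          linear_combination -(hRp r)
        apply ext_inner_left 𝕜
        intro x
        rw [← hd, hDDp, innerCLM_apply]
      have hB₁p : B₁ p = 0 := by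
        obtain ⟨p₀, hp₀W, p₁, hp₁W, hp₀, hp₁, hsum⟩ := hker p hpW
        have hBp : B₁ p = B₁ p₀ := by
          rw [hsum, (hB₁lin p₀ hp₀W p₁ hp₁W 0).1, hp₁, add_zero]
        have h := hfact p hpW p₀ hp₀W
        rw [hp₀, inner_zero_left, sub_zero] at h
        have hLHS : (DD p) p₀ + conj ((DD p₀) p) = (inner 𝕜 (p₀ + d p₀) p : 𝕜) := by
          rw [hd, hd, hdp, inner_add_left, inner_conj_symm]
        rw [hLHS, hZp p₀ hp₀W hp₀] at h
        have h2 : (inner 𝕜 (B₁ p) (B₁ p) : 𝕜) = 0 := by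
          nth_rewrite 1 [hBp]
          exact h.symm
        exact inner_self_eq_zero.mp h2
      have hnorm : 2 * ‖p‖ ^ 2 ≤ 0 := by
        have h := hre p hpW
        rw [hdp, hB₁p] at h
        have h2 : RCLike.re (inner 𝕜 p p : 𝕜) = ‖p‖ ^ 2 := inner_self_eq_norm_sq p
        rw [h2] at h
        simp only [norm_zero] at h
        nlinarith [sq_nonneg ‖B₀ p‖]
      have : ‖p‖ = 0 := by nlinarith [sq_nonneg ‖p‖, norm_nonneg p]
      exact norm_eq_zero.mp this
    intro g
    exact Submodule.eq_top_iff'.mp htop g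
  -- the set N = {w ∈ W : d w = -w}
  have himg : B₀ '' Wset = B₀ '' {w | w ∈ Wset ∧ d w = -w} := by
    apply Set.Subset.antisymm
    · rintro x ⟨v, hv, rfl⟩
      obtain ⟨u, ⟨huW, hu0⟩, hequ⟩ := hMtop (v + d v)
      refine ⟨v - u, ⟨hWsub v hv u huW, ?_⟩, ?_⟩
      · rw [hdsub v hv u huW]
        have h1 : d v - d u = u - v := by
          rw [sub_eq_sub_iff_add_eq_add, add_comm (d v) v]
          exact hequ
        rw [h1, neg_sub]
      · rw [hB₀sub v hv u huW, hu0, sub_zero]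
    · rintro x ⟨w, ⟨hwW, _⟩, rfl⟩
      exact ⟨w, hwW, rfl⟩
  rw [himg]
  apply IsSeqClosed.isClosed
  intro h L hh hhL
  choose w hw hbw using hh
  have hbound : ∀ n m : ℕ, ‖w n - w m‖ ≤ ‖h n - h m‖ := by
    intro n m
    have hz : w n - w m ∈ Wset := hWsub _ (hw n).1 _ (hw m).1
    have hdz : d (w n - w m) = -(w n - w m) := by
      rw [hdsub _ (hw n).1 _ (hw m).1, (hw n).2, (hw m).2]
      abel
    have he := hre _ hz
    rw [hdz] at he
    rw [inner_neg_right] at he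
    have h2 : RCLike.re (-(inner 𝕜 (w n - w m) (w n - w m) : 𝕜)) = -(‖w n - w m‖ ^ 2) := by
      rw [map_neg, inner_self_eq_norm_sq]
    rw [h2] at he
    have hB : B₀ (w n - w m) = h n - h m := by
      rw [hB₀sub _ (hw n).1 _ (hw m).1, hbw n, hbw m]
    rw [hB] at he
    rw [← pow_le_pow_iff_left₀ (norm_nonneg _) (norm_nonneg _) (two_ne_zero)]
    nlinarith [sq_nonneg ‖B₁ (w n - w m)‖]
  have hhC : CauchySeq h := hhL.cauchySeq
  have hcw : CauchySeq w := by
    rw [Metric.cauchySeq_iff] at hhC ⊢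
    intro ε hε
    obtain ⟨N, hN⟩ := hhC ε hε
    refine ⟨N, fun n hn m hm => ?_⟩
    have := hN n hn m hm
    rw [dist_eq_norm] at this ⊢
    exact lt_of_le_of_lt (hbound n m) this
  obtain ⟨wL, hwL⟩ := cauchySeq_tendsto_of_complete hcw
  have hdw : Tendsto (fun n => d (w n)) atTop (nhds (-wL)) := by
    have h1 : Tendsto (fun n => -(w n)) atTop (nhds (-wL)) := hwL.neg
    apply Tendsto.congr _ h1
    intro n
    exact ((hw n).2).symm
  obtain ⟨hwLW, hdwL⟩ := hgraph w wL (-wL) (fun n => (hw n).1) hwL hdw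
  have hzero : Tendsto (fun n => C₀ * (‖wL - w n‖ + ‖d wL - d (w n)‖)) atTop (nhds 0) := by
    have h1 : Tendsto (fun n => wL - w n) atTop (nhds 0) := by
      simpa using hwL.const_sub wL
    have h2 : Tendsto (fun n => d wL - d (w n)) atTop (nhds 0) := by
      have h3 : Tendsto (fun n => d wL - d (w n)) atTop (nhds (d wL - (-wL))) :=
        hdw.const_sub (d wL)
      rw [hdwL] at h3 ⊢
      simpa using h3
    have := ((h1.norm).add (h2.norm)).const_mul C₀
    simpa using this
  have hBL : Tendsto (fun n => B₀ (w n)) atTop (nhds (B₀ wL)) := by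
    rw [tendsto_iff_norm_sub_tendsto_zero]
    apply squeeze_zero (fun n => norm_nonneg _) _ hzero
    intro n
    have h1 : B₀ (w n) - B₀ wL = B₀ (w n - wL) := (hB₀sub _ (hw n).1 _ hwLW).symm
    rw [h1]
    calc ‖B₀ (w n - wL)‖ ≤ C₀ * (‖w n - wL‖ + ‖d (w n - wL)‖) :=
          hC₀ _ (hWsub _ (hw n).1 _ hwLW)
    _ = C₀ * (‖wL - w n‖ + ‖d wL - d (w n)‖) := by
        rw [hdsub _ (hw n).1 _ hwLW, norm_sub_rev, norm_sub_rev (d (w n))]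
  have hL : L = B₀ wL := by
    have h1 : Tendsto h atTop (nhds (B₀ wL)) := by
      apply Tendsto.congr _ hBL
      intro n
      exact hbw n
    exact tendsto_nhds_unique hhL h1
  exact ⟨wL, ⟨hwLW, hdwL⟩, hL.symm⟩



/-- Proposition 4.6: in the boundary-operator setting over the extended
domain `Wset` of a derivation `D0 : R → V'` (with extension `DD` and
boundary form `b(v,w) = ⟨DD v, w⟩ + conj⟨DD w, v⟩`), where `B₀, B₁` are
linear maps from `W` to a Hilbert space `H`, bounded for the `W`-norm
`‖·‖_V + ‖DD ·‖_{V'}`, satisfying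
`b(v,w) = ⟨B₁v, B₁w⟩_H - ⟨B₀v, B₀w⟩_H` and `ker B₀ + ker B₁ = W`,
the ranges `B₀(W)` and `B₁(W)` are closed subsets of `H`. -/
theorem stmt14 {𝕜 V H : Type*} [RCLike 𝕜]
    [NormedAddCommGroup V] [InnerProductSpace 𝕜 V] [CompleteSpace V]
    [NormedAddCommGroup H] [InnerProductSpace 𝕜 H] [CompleteSpace H]
    (R : Submodule 𝕜 V) (hR : Dense (R : Set V))
    (D0 : R →ₗ[𝕜] (V →SL[starRingEnd 𝕜] 𝕜))
    (hder : ∀ u v : R, D0 u (v : V) + (starRingEnd 𝕜) (D0 v (u : V)) = 0)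
    (Wset : Set V)
    (hWset : Wset = {v : V | ∃ f : V →SL[starRingEnd 𝕜] 𝕜,
        ∀ r : R, f (r : V) + (starRingEnd 𝕜) (D0 r v) = 0})
    (DD : V → (V →SL[starRingEnd 𝕜] 𝕜))
    (hDD : ∀ v ∈ Wset, ∀ r : R, DD v (r : V) + (starRingEnd 𝕜) (D0 r v) = 0)
    (B₀ B₁ : V → H)
    (hB₀lin : ∀ v ∈ Wset, ∀ w ∈ Wset, ∀ c : 𝕜,
        B₀ (v + w) = B₀ v + B₀ w ∧ B₀ (c • v) = c • B₀ v)
    (hB₁lin : ∀ v ∈ Wset, ∀ w ∈ Wset, ∀ c : 𝕜,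
        B₁ (v + w) = B₁ v + B₁ w ∧ B₁ (c • v) = c • B₁ v)
    (hB₀bdd : ∃ C : ℝ, ∀ v ∈ Wset, ‖B₀ v‖ ≤ C * (‖v‖ + ‖DD v‖))
    (hB₁bdd : ∃ C : ℝ, ∀ v ∈ Wset, ‖B₁ v‖ ≤ C * (‖v‖ + ‖DD v‖))
    (hfact : ∀ v ∈ Wset, ∀ w ∈ Wset,
        DD v w + (starRingEnd 𝕜) (DD w v) =
          (inner 𝕜 (B₁ w) (B₁ v) : 𝕜) - inner 𝕜 (B₀ w) (B₀ v))
    (hker : ∀ w ∈ Wset, ∃ w₀ ∈ Wset, ∃ w₁ ∈ Wset,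
        B₀ w₀ = 0 ∧ B₁ w₁ = 0 ∧ w = w₀ + w₁) :
    IsClosed (B₀ '' Wset) ∧ IsClosed (B₁ '' Wset) := by
  constructor
  · exact master R hR D0 hder Wset hWset DD hDD B₀ B₁ hB₀lin hB₁lin hB₀bdd hB₁bdd hfact hker
  · -- apply master with the roles of B₀ and B₁ swapped and D0, DD negated
    have hder' : ∀ u v : R, (-D0) u (v : V) + (starRingEnd 𝕜) ((-D0) v (u : V)) = 0 := by
      intro u v
      simp only [LinearMap.neg_apply, ContinuousLinearMap.neg_apply, map_neg]
      linear_combination -(hder u v)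
    have hWset' : Wset = {v : V | ∃ f : V →SL[starRingEnd 𝕜] 𝕜,
        ∀ r : R, f (r : V) + (starRingEnd 𝕜) ((-D0) r v) = 0} := by
      rw [hWset]
      ext v
      simp only [Set.mem_setOf_eq, LinearMap.neg_apply, ContinuousLinearMap.neg_apply, map_neg]
      constructor
      · rintro ⟨f, hf⟩
        refine ⟨-f, fun r => ?_⟩
        have := hf r
        simp only [ContinuousLinearMap.neg_apply]
        linear_combination -this
      · rintro ⟨f, hf⟩
        refine ⟨-f, fun r => ?_⟩
        have := hf r
        simp only [ContinuousLinearMap.neg_apply]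
        linear_combination -this
    have hDD' : ∀ v ∈ Wset, ∀ r : R,
        (-(DD v)) (r : V) + (starRingEnd 𝕜) ((-D0) r v) = 0 := by
      intro v hv r
      simp only [LinearMap.neg_apply, ContinuousLinearMap.neg_apply, map_neg]
      linear_combination -(hDD v hv r)
    have hB₁bdd' : ∃ C : ℝ, ∀ v ∈ Wset, ‖B₁ v‖ ≤ C * (‖v‖ + ‖-(DD v)‖) := by
      obtain ⟨C, hC⟩ := hB₁bdd
      exact ⟨C, fun v hv => by rw [norm_neg]; exact hC v hv⟩
    have hB₀bdd' : ∃ C : ℝ, ∀ v ∈ Wset, ‖B₀ v‖ ≤ C * (‖v‖ + ‖-(DD v)‖) := by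
      obtain ⟨C, hC⟩ := hB₀bdd
      exact ⟨C, fun v hv => by rw [norm_neg]; exact hC v hv⟩
    have hfact' : ∀ v ∈ Wset, ∀ w ∈ Wset,
        (-(DD v)) w + (starRingEnd 𝕜) ((-(DD w)) v) =
          (inner 𝕜 (B₀ w) (B₀ v) : 𝕜) - inner 𝕜 (B₁ w) (B₁ v) := by
      intro v hv w hw
      simp only [ContinuousLinearMap.neg_apply, map_neg]
      linear_combination -(hfact v hv w hw)
    have hker' : ∀ w ∈ Wset, ∃ w₀ ∈ Wset, ∃ w₁ ∈ Wset,
        B₁ w₀ = 0 ∧ B₀ w₁ = 0 ∧ w = w₀ + w₁ := by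
      intro w hw
      obtain ⟨w₀, hw₀W, w₁, hw₁W, h0, h1, hsum⟩ := hker w hw
      exact ⟨w₁, hw₁W, w₀, hw₀W, h1, h0, by rw [hsum, add_comm]⟩
    exact master R hR (-D0) hder' Wset hWset' (fun v => -(DD v)) hDD' B₁ B₀
      hB₁lin hB₀lin hB₁bdd' hB₀bdd' hfact' hker'
end

section
/- Let Z ⊆ W be an admissible subspace (so ‖B₁w‖ ≤ ‖B₀w‖ for w ∈ Z). Then there exists a linear contraction Φ : Ran B₀ → Ran B₁ (‖Φx‖ ≤ ‖x‖) such that Z ⊆ Z_Φ := { w ∈ W : B₁w = Φ B₀w }. -/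
/-- Lemma 4.7: in the boundary-operator setting (`R ⊆ ker B₀ ∩ ker B₁`,
`ker B₀ + ker B₁ = W`, ranges of `B₀` and `B₁` closed in `H`), for every
admissible subspace `Z` (i.e. `R ⊆ Z` and `‖B₁w‖ ≤ ‖B₀w‖` on `Z`) there is
a linear contraction `Φ : Ran B₀ → Ran B₁` (encoded as a linear map on `H`
contractive on `Ran B₀` and mapping `Ran B₀` into `Ran B₁`) with
`Z ⊆ Z_Φ = {w ∈ W : B₁w = Φ B₀w}`. -/
theorem stmt15 {𝕜 W H : Type*} [RCLike 𝕜]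
    [NormedAddCommGroup W] [InnerProductSpace 𝕜 W] [CompleteSpace W]
    [NormedAddCommGroup H] [InnerProductSpace 𝕜 H] [CompleteSpace H]
    (B₀ B₁ : W →L[𝕜] H) (R : Submodule 𝕜 W)
    (hR : R ≤ LinearMap.ker (B₀ : W →ₗ[𝕜] H) ⊓ LinearMap.ker (B₁ : W →ₗ[𝕜] H))
    (hker : LinearMap.ker (B₀ : W →ₗ[𝕜] H) ⊔ LinearMap.ker (B₁ : W →ₗ[𝕜] H) = ⊤)
    (hr₀ : IsClosed (LinearMap.range (B₀ : W →ₗ[𝕜] H) : Set H))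
    (hr₁ : IsClosed (LinearMap.range (B₁ : W →ₗ[𝕜] H) : Set H))
    (Z : Submodule 𝕜 W) (hRZ : R ≤ Z)
    (hadm : ∀ w ∈ Z, ‖B₁ w‖ ≤ ‖B₀ w‖) :
    ∃ Φ : H →ₗ[𝕜] H,
      (∀ w : W, ‖Φ (B₀ w)‖ ≤ ‖B₀ w‖) ∧
      (∀ w : W, Φ (B₀ w) ∈ LinearMap.range (B₁ : W →ₗ[𝕜] H)) ∧
      ∀ w ∈ Z, B₁ w = Φ (B₀ w) := by
  classical
  -- well-definedness: on `Z`, `B₀ w` determines `B₁ w`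
  have key : ∀ w ∈ Z, ∀ w' ∈ Z, B₀ w = B₀ w' → B₁ w = B₁ w' := by
    intro w hw w' hw' h
    have hmem : w - w' ∈ Z := Z.sub_mem hw hw'
    have h0 : B₀ (w - w') = 0 := by simp [map_sub, h]
    have := hadm _ hmem
    rw [h0, norm_zero] at this
    have : B₁ (w - w') = 0 := norm_le_zero_iff.mp this
    rw [map_sub, sub_eq_zero] at this
    exact this
  -- the submodule `S = B₀(Z)` of `H`
  set S : Submodule 𝕜 H := Z.map (B₀ : W →ₗ[𝕜] H) with hS
  have pick : ∀ s : S, ∃ w, w ∈ Z ∧ B₀ w = (s : H) := by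
    rintro ⟨s, hs⟩
    rcases hs with ⟨w, hw, hws⟩
    exact ⟨w, hw, hws⟩
  choose p hpZ hpB using pick
  -- the map `φ : S → H`, `B₀ w ↦ B₁ w`
  have hadd : ∀ s t : S, B₁ (p (s + t)) = B₁ (p s) + B₁ (p t) := by
    intro s t
    have : B₁ (p (s + t)) = B₁ (p s + p t) := by
      apply key _ (hpZ _) _ (Z.add_mem (hpZ s) (hpZ t))
      rw [hpB, map_add, hpB, hpB]; rfl
    simpa [map_add] using this
  have hsmul : ∀ (c : 𝕜) (s : S), B₁ (p (c • s)) = c • B₁ (p s) := by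
    intro c s
    have : B₁ (p (c • s)) = B₁ (c • p s) := by
      apply key _ (hpZ _) _ (Z.smul_mem c (hpZ s))
      rw [hpB, map_smul, hpB]; rfl
    simpa [map_smul] using this
  set φ : S →ₗ[𝕜] H :=
    { toFun := fun s => B₁ (p s)
      map_add' := hadd
      map_smul' := hsmul } with hφ
  have hφnorm : ∀ s : S, ‖φ s‖ ≤ 1 * ‖s‖ := by
    intro s
    have : ‖B₁ (p s)‖ ≤ ‖B₀ (p s)‖ := hadm _ (hpZ s)
    rw [hpB] at this
    simpa [hφ] using this
  set φL : S →L[𝕜] H := φ.mkContinuous 1 hφnorm with hφL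
  have hφLs : ∀ s : S, φL s = B₁ (p s) := fun s => rfl
  -- the closure `M` of `S`, complete
  set M : Submodule 𝕜 H := S.topologicalClosure with hM
  haveI : CompleteSpace M := IsClosed.completeSpace_coe (hs := S.isClosed_topologicalClosure)
  have hSM : S ≤ M := Submodule.le_topologicalClosure S
  -- inclusion `e : S → M`, an isometry with dense range
  have hinorm : ∀ s : S, ‖Submodule.inclusion hSM s‖ = ‖s‖ := fun s => rfl
  set e : S →L[𝕜] M :=
    (Submodule.inclusion hSM).mkContinuous 1 (fun s => by rw [hinorm]; simp) with he
  have hiso : Isometry e := AddMonoidHomClass.isometry_of_norm e hinorm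
  have h_e : IsUniformInducing e := hiso.isUniformInducing
  have h_dense : DenseRange e := by
    intro m
    have hm : (m : H) ∈ closure (S : Set H) := by
      have h2 : (m : H) ∈ (S.topologicalClosure : Set H) := m.2
      rwa [Submodule.topologicalClosure_coe] at h2
    have himg : ((↑) '' Set.range (⇑e) : Set H) = (S : Set H) := by
      ext x
      constructor
      · rintro ⟨y, ⟨s, rfl⟩, rfl⟩; exact s.2
      · intro hx; exact ⟨e ⟨x, hx⟩, ⟨⟨x, hx⟩, rfl⟩, rfl⟩
    exact closure_subtype.mpr (himg ▸ hm)
  -- the extension of `φL` to `M`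
  set Φe : M →L[𝕜] H := φL.extend e with hΦe
  have hΦe_eq : ∀ s : S, Φe (e s) = φL s := fun s =>
    ContinuousLinearMap.extend_eq φL h_dense h_e s
  -- contraction on `M`
  have hΦe_norm : ∀ m : M, ‖Φe m‖ ≤ ‖m‖ := by
    refine isClosed_property h_dense
      (isClosed_le (continuous_norm.comp Φe.continuous) continuous_norm) fun s => ?_
    rw [hΦe_eq]
    have h1 : ‖φL s‖ ≤ ‖s‖ := (hφnorm s).trans_eq (one_mul _)
    have h2 : ‖e s‖ = ‖s‖ := hinorm s
    rw [h2]; exact h1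
  -- values in `Ran B₁`
  have hΦe_range : ∀ m : M, Φe m ∈ LinearMap.range (B₁ : W →ₗ[𝕜] H) := by
    refine isClosed_property h_dense (hr₁.preimage Φe.continuous) fun s => ?_
    rw [hΦe_eq]
    exact ⟨p s, rfl⟩
  -- the final map
  set P := M.orthogonalProjectionOnto with hP
  refine ⟨(Φe.comp P).toLinearMap, ?_, ?_, ?_⟩
  · intro w
    calc ‖Φe (P (B₀ w))‖ ≤ ‖(P (B₀ w) : M)‖ := hΦe_norm _
      _ ≤ ‖B₀ w‖ := by
        have := ContinuousLinearMap.le_opNorm (M.orthogonalProjectionOnto) (B₀ w)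
        calc ‖(P (B₀ w) : M)‖ ≤ ‖M.orthogonalProjectionOnto‖ * ‖B₀ w‖ := this
          _ ≤ 1 * ‖B₀ w‖ :=
            mul_le_mul_of_nonneg_right (Submodule.orthogonalProjectionOnto_norm_le M) (norm_nonneg _)
          _ = ‖B₀ w‖ := one_mul _
  · intro w
    exact hΦe_range _
  · intro w hw
    have hwS : B₀ w ∈ S := ⟨w, hw, rfl⟩
    have hwM : B₀ w ∈ M := hSM hwS
    have hproj : P (B₀ w) = ⟨B₀ w, hwM⟩ := by
      simpa using Submodule.orthogonalProjectionOnto_mem_subspace_eq_self (⟨B₀ w, hwM⟩ : M)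
    have hein : e ⟨B₀ w, hwS⟩ = ⟨B₀ w, hwM⟩ := rfl
    have : Φe ⟨B₀ w, hwM⟩ = φL ⟨B₀ w, hwS⟩ := by rw [← hein]; exact hΦe_eq _
    have hval : φL ⟨B₀ w, hwS⟩ = B₁ (p ⟨B₀ w, hwS⟩) := rfl
    have hlast : B₁ (p ⟨B₀ w, hwS⟩) = B₁ w := by
      apply key _ (hpZ _) _ hw
      rw [hpB]
    show B₁ w = Φe (P (B₀ w))
    rw [hproj, this, hval, hlast]
end

section
/- In the boundary-operator setting, for every linear contraction Φ : Ran B₀ → Ran B₁ the space Z_Φ = { w ∈ W : B₁w = Φ B₀w } is maximal admissible; conversely every maximal admissible subspace of W equals Z_Φ for some such contraction Φ. -/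
/-- `Z` is admissible (boundary-operator setting): `R ⊆ Z` and
`b(w,w) = ‖B₁w‖² - ‖B₀w‖² ≤ 0` on `Z`. -/
def AdmissibleBd {𝕜 W H : Type*} [RCLike 𝕜]
    [NormedAddCommGroup W] [NormedSpace 𝕜 W]
    [NormedAddCommGroup H] [NormedSpace 𝕜 H]
    (B₀ B₁ : W →L[𝕜] H) (R : Submodule 𝕜 W) (Z : Submodule 𝕜 W) : Prop :=
  R ≤ Z ∧ ∀ w ∈ Z, ‖B₁ w‖ ≤ ‖B₀ w‖

private lemma stmt16_ext {𝕜 W H : Type*} [RCLike 𝕜]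
    [NormedAddCommGroup W] [InnerProductSpace 𝕜 W] [CompleteSpace W]
    [NormedAddCommGroup H] [InnerProductSpace 𝕜 H] [CompleteSpace H]
    (B₀ B₁ : W →L[𝕜] H) (Z : Submodule 𝕜 W)
    (hZ : ∀ w ∈ Z, ‖B₁ w‖ ≤ ‖B₀ w‖)
    (hr₁ : IsClosed (LinearMap.range (B₁ : W →ₗ[𝕜] H) : Set H)) :
    ∃ Φ : H →ₗ[𝕜] H, (∀ x : H, ‖Φ x‖ ≤ ‖x‖) ∧
      (∀ x : H, Φ x ∈ LinearMap.range (B₁ : W →ₗ[𝕜] H)) ∧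
      (∀ z ∈ Z, Φ (B₀ z) = B₁ z) := by
  classical
  set G : Submodule 𝕜 (H × H) :=
    Z.map ((B₀.prod B₁).toLinearMap) with hG
  set Gc := G.topologicalClosure with hGcdef
  have hGsub : (G : Set (H × H)) ⊆ {p : H × H | ‖p.2‖ ≤ ‖p.1‖} := by
    rintro p ⟨z, hz, rfl⟩
    exact hZ z hz
  have hGc2 : ∀ p ∈ Gc, ‖(p : H × H).2‖ ≤ ‖(p : H × H).1‖ := by
    intro p hp
    have : (Gc : Set (H × H)) ⊆ {p : H × H | ‖p.2‖ ≤ ‖p.1‖} := by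
      rw [hGcdef, Submodule.topologicalClosure_coe]
      exact closure_minimal hGsub (isClosed_le (by fun_prop) (by fun_prop))
    exact this hp
  have hGc1 : ∀ p ∈ Gc, (p : H × H).2 ∈ LinearMap.range (B₁ : W →ₗ[𝕜] H) := by
    intro p hp
    have : (Gc : Set (H × H)) ⊆ {p : H × H | p.2 ∈ LinearMap.range (B₁ : W →ₗ[𝕜] H)} := by
      rw [hGcdef, Submodule.topologicalClosure_coe]
      refine closure_minimal ?_ (hr₁.preimage continuous_snd)
      rintro p ⟨z, hz, rfl⟩
      exact ⟨z, rfl⟩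
    exact this hp
  set π₁ : Gc →ₗ[𝕜] H := (LinearMap.fst 𝕜 H H).comp Gc.subtype with hπ₁
  have hπ₁app : ∀ p : Gc, π₁ p = (p : H × H).1 := fun p => rfl
  have hinj : Function.Injective π₁ := by
    intro p q hpq
    have h1 : ((p - q : Gc) : H × H).1 = 0 := by
      have : (p : H × H).1 - (q : H × H).1 = 0 := by
        rw [← hπ₁app, ← hπ₁app, ← map_sub] at *
        simpa [hπ₁app] using sub_eq_zero.2 hpq
      simpa using this
    have h2 : ‖((p - q : Gc) : H × H).2‖ ≤ ‖((p - q : Gc) : H × H).1‖ :=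
      hGc2 _ (p - q).2
    rw [h1, norm_zero] at h2
    have h2' : ((p - q : Gc) : H × H).2 = 0 := norm_le_zero_iff.mp h2
    have : ((p - q : Gc) : H × H) = 0 := Prod.ext h1 h2'
    have : (p - q : Gc) = 0 := Subtype.ext this
    exact sub_eq_zero.mp this
  set N := LinearMap.range π₁ with hN
  -- N is complete
  have hGcIsComplete : IsComplete (Gc : Set (H × H)) := by
    rw [hGcdef, Submodule.topologicalClosure_coe]
    exact isClosed_closure.isComplete
  have hι : Isometry (fun p : Gc => (p : H × H).1) := by
    refine Isometry.of_dist_eq fun p q => ?_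
    have h2 : ‖((p - q : Gc) : H × H).2‖ ≤ ‖((p - q : Gc) : H × H).1‖ :=
      hGc2 _ (p - q).2
    have : dist p q = ‖((p - q : Gc) : H × H)‖ := by
      rw [Subtype.dist_eq, dist_eq_norm]; norm_cast
    rw [this, Prod.norm_def, max_eq_left h2, dist_eq_norm]
    congr 1
  have hNcomplete : IsComplete (N : Set H) := by
    have : (N : Set H) = Set.range (fun p : Gc => (p : H × H).1) := by
      ext x; constructor
      · rintro ⟨p, rfl⟩; exact ⟨p, rfl⟩
      · rintro ⟨p, rfl⟩; exact ⟨p, rfl⟩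
    rw [this, ← Set.image_univ]
    rw [isComplete_image_iff hι.isUniformInducing]
    exact completeSpace_iff_isComplete_univ.mp
      (completeSpace_coe_iff_isComplete.mpr hGcIsComplete)
  haveI : CompleteSpace N := hNcomplete.completeSpace_coe
  set e := LinearEquiv.ofInjective π₁ hinj with he
  set P := Submodule.orthogonalProjectionOnto N with hP
  refine ⟨(LinearMap.snd 𝕜 H H) ∘ₗ Gc.subtype ∘ₗ (e.symm : N ≃ₗ[𝕜] Gc).toLinearMap
      ∘ₗ (P : H →L[𝕜] N).toLinearMap, ?_, ?_, ?_⟩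
  · intro x
    simp only [LinearMap.comp_apply, ContinuousLinearMap.coe_coe, LinearMap.snd_apply,
      Submodule.coe_subtype, LinearEquiv.coe_coe]
    set g : Gc := e.symm (P x) with hg
    have hg1 : (g : H × H).1 = (P x : H) := by
      have := LinearEquiv.ofInjective_symm_apply (f := π₁) (h := hinj) (P x)
      rw [← he] at this
      simpa [hπ₁app] using this
    calc ‖(g : H × H).2‖ ≤ ‖(g : H × H).1‖ := hGc2 _ g.2
      _ = ‖(P x : H)‖ := by rw [hg1]
      _ ≤ ‖x‖ := by
          calc ‖(P x : H)‖ ≤ ‖P‖ * ‖x‖ := (P : H →L[𝕜] N).le_opNorm x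
            _ ≤ 1 * ‖x‖ := by
                have := Submodule.orthogonalProjectionOnto_norm_le N
                exact mul_le_mul_of_nonneg_right this (norm_nonneg x)
            _ = ‖x‖ := one_mul ‖x‖
  · intro x
    exact hGc1 _ (e.symm (P x)).2
  · intro z hz
    have hmemG : ((B₀ z, B₁ z) : H × H) ∈ Gc :=
      Submodule.le_topologicalClosure G ⟨z, hz, rfl⟩
    have hBmem : B₀ z ∈ N := ⟨⟨_, hmemG⟩, rfl⟩
    have hPz : P (B₀ z) = ⟨B₀ z, hBmem⟩ := by
      have := Submodule.orthogonalProjectionOnto_mem_subspace_eq_self (K := N) ⟨B₀ z, hBmem⟩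
      simpa [hP] using this
    simp only [LinearMap.comp_apply, ContinuousLinearMap.coe_coe, LinearMap.snd_apply,
      Submodule.coe_subtype, LinearEquiv.coe_coe, hPz]
    have hkey : (⟨B₀ z, hBmem⟩ : N) = e ⟨((B₀ z, B₁ z) : H × H), hmemG⟩ := by
      apply Subtype.ext
      rw [he, LinearEquiv.ofInjective_apply]
      rfl
    rw [hkey, e.symm_apply_apply]


/-- Theorem 4.8: in the boundary-operator setting, for every linear
contraction `Φ : Ran B₀ → Ran B₁` the subspace
`Z_Φ = {w ∈ W : B₁w = Φ B₀w}` is maximal admissible; conversely every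
maximal admissible subspace of `W` is of this form. -/
theorem stmt16 {𝕜 W H : Type*} [RCLike 𝕜]
    [NormedAddCommGroup W] [InnerProductSpace 𝕜 W] [CompleteSpace W]
    [NormedAddCommGroup H] [InnerProductSpace 𝕜 H] [CompleteSpace H]
    (B₀ B₁ : W →L[𝕜] H) (R : Submodule 𝕜 W)
    (hR : R ≤ LinearMap.ker (B₀ : W →ₗ[𝕜] H) ⊓ LinearMap.ker (B₁ : W →ₗ[𝕜] H))
    (hker : LinearMap.ker (B₀ : W →ₗ[𝕜] H) ⊔ LinearMap.ker (B₁ : W →ₗ[𝕜] H) = ⊤)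
    (hr₀ : IsClosed (LinearMap.range (B₀ : W →ₗ[𝕜] H) : Set H))
    (hr₁ : IsClosed (LinearMap.range (B₁ : W →ₗ[𝕜] H) : Set H)) :
    (∀ Φ : H →ₗ[𝕜] H, (∀ w : W, ‖Φ (B₀ w)‖ ≤ ‖B₀ w‖) →
      (∀ w : W, Φ (B₀ w) ∈ LinearMap.range (B₁ : W →ₗ[𝕜] H)) →
      ∀ Z : Submodule 𝕜 W, (Z : Set W) = {w : W | B₁ w = Φ (B₀ w)} →
        (AdmissibleBd B₀ B₁ R Z ∧
          ∀ Z' : Submodule 𝕜 W, AdmissibleBd B₀ B₁ R Z' → Z ≤ Z' → Z' = Z)) ∧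
    (∀ Z : Submodule 𝕜 W, AdmissibleBd B₀ B₁ R Z →
      (∀ Z' : Submodule 𝕜 W, AdmissibleBd B₀ B₁ R Z' → Z ≤ Z' → Z' = Z) →
      ∃ Φ : H →ₗ[𝕜] H, (∀ w : W, ‖Φ (B₀ w)‖ ≤ ‖B₀ w‖) ∧
        (∀ w : W, Φ (B₀ w) ∈ LinearMap.range (B₁ : W →ₗ[𝕜] H)) ∧
        (Z : Set W) = {w : W | B₁ w = Φ (B₀ w)}) := by
  -- decomposition along the kernels
  have hdec : ∀ w : W, ∃ u ∈ LinearMap.ker (B₀ : W →ₗ[𝕜] H), ∃ v ∈ LinearMap.ker (B₁ : W →ₗ[𝕜] H), u + v = w := by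
    intro w
    have : w ∈ LinearMap.ker (B₀ : W →ₗ[𝕜] H) ⊔ LinearMap.ker (B₁ : W →ₗ[𝕜] H) := hker ▸ Submodule.mem_top
    exact Submodule.mem_sup.mp this
  constructor
  · -- Part 1
    intro Φ hΦnorm hΦran Z hZset
    have hmemZ : ∀ w : W, w ∈ Z ↔ B₁ w = Φ (B₀ w) := by
      intro w
      constructor
      · intro hw; exact Set.ext_iff.mp hZset w |>.mp hw
      · intro hw; exact Set.ext_iff.mp hZset w |>.mpr hw
    have hadm : AdmissibleBd B₀ B₁ R Z := by
      constructor
      · intro w hw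
        have h' := hR hw
        rw [Submodule.mem_inf, LinearMap.mem_ker, LinearMap.mem_ker, ContinuousLinearMap.coe_coe,
          ContinuousLinearMap.coe_coe] at h'
        rw [hmemZ, h'.1, h'.2, map_zero]
      · intro w hw
        rw [hmemZ] at hw
        rw [hw]; exact hΦnorm w
    refine ⟨hadm, fun Z' hZ' hZZ' => ?_⟩
    refine le_antisymm (fun w hw => ?_) hZZ'
    -- construct z ∈ Z with B₀ z = B₀ w, B₁ z = Φ (B₀ w)
    obtain ⟨u, hu, v, hv, huv⟩ := hdec w
    obtain ⟨w₂, hw₂⟩ := hΦran w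
    obtain ⟨u₂, hu₂, v₂, hv₂, huv₂⟩ := hdec w₂
    rw [LinearMap.mem_ker, ContinuousLinearMap.coe_coe] at hu hv hu₂ hv₂
    have hB₀v : B₀ v = B₀ w := by
      rw [← huv]; simp [hu]
    have hB₁u₂ : B₁ u₂ = Φ (B₀ w) := by
      rw [← hw₂, ← huv₂]; simp [hv₂]
    set z := v + u₂ with hz
    have hB₀z : B₀ z = B₀ w := by simp [hz, hu₂, hB₀v]
    have hB₁z : B₁ z = Φ (B₀ w) := by simp [hz, hv, hB₁u₂]
    have hzZ : z ∈ Z := by rw [hmemZ, hB₁z, hB₀z]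
    have hzZ' : z ∈ Z' := hZZ' hzZ
    have hwz : w - z ∈ Z' := Z'.sub_mem hw hzZ'
    have h0 : B₀ (w - z) = 0 := by simp [hB₀z]
    have h1 : ‖B₁ (w - z)‖ ≤ ‖B₀ (w - z)‖ := hZ'.2 _ hwz
    rw [h0, norm_zero] at h1
    have h1' : B₁ (w - z) = 0 := norm_le_zero_iff.mp h1
    have : B₁ w = B₁ z := by
      have := sub_eq_zero.mp (by simpa using h1')
      exact this
    rw [hmemZ, this, hB₁z]
  · -- Part 2
    intro Z hadm hmax
    obtain ⟨Φ, hΦnorm, hΦran, hΦZ⟩ := stmt16_ext B₀ B₁ Z hadm.2 hr₁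
    refine ⟨Φ, fun w => hΦnorm (B₀ w), fun w => hΦran (B₀ w), ?_⟩
    set Zmax : Submodule 𝕜 W :=
      LinearMap.ker ((B₁ : W →ₗ[𝕜] H) - Φ ∘ₗ (B₀ : W →ₗ[𝕜] H)) with hZmax
    have hmemZmax : ∀ w : W, w ∈ Zmax ↔ B₁ w = Φ (B₀ w) := by
      intro w
      rw [hZmax, LinearMap.mem_ker, LinearMap.sub_apply, LinearMap.comp_apply, sub_eq_zero]
      rfl
    have hZle : Z ≤ Zmax := fun z hz => (hmemZmax z).mpr (hΦZ z hz).symm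
    have hadm' : AdmissibleBd B₀ B₁ R Zmax := by
      refine ⟨le_trans hadm.1 hZle, fun w hw => ?_⟩
      rw [(hmemZmax w).mp hw]
      exact hΦnorm (B₀ w)
    have hEq : Zmax = Z := hmax Zmax hadm' hZle
    rw [← hEq]
    ext w
    exact hmemZmax w
end

section
/- Let Φ : Ran B₀ → Ran B₁ be a linear contraction. Then the b-orthogonal of Z_Φ is Z_{Φ*}, i.e. {u ∈ W : b(u,z) = 0 for all z ∈ Z_Φ} = { w ∈ W : B₀w = Φ* B₁w }; consequently Z_Φ^{bb} = Z_Φ for every maximal admissible subspace Z_Φ, and distinct contractions Φ ≠ Ψ give Z_Φ ≠ Z_Ψ. -/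
/-- Proposition 4.9 (and Lemma on `Z^{bb}`, Corollary 5.15): in the
boundary-operator setting with `b(u,z) = ⟨B₁u,B₁z⟩_H - ⟨B₀u,B₀z⟩_H`, for a
linear contraction `Φ : Ran B₀ → Ran B₁` with adjoint `Ψ = Φ*`
(characterized by `⟨Φ B₀v, B₁w⟩ = ⟨B₀v, Ψ B₁w⟩`):
(1) the `b`-orthogonal of `Z_Φ = {w : B₁w = Φ B₀w}` is
`Z_{Φ*} = {w : B₀w = Ψ B₁w}`; (2) consequently `Z_Φ^{bb} = Z_Φ`;
(3) distinct contractions give distinct spaces: if `Z_Φ = Z_{Φ'}` then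
`Φ = Φ'` on `Ran B₀`. -/
theorem stmt17 {𝕜 W H : Type*} [RCLike 𝕜]
    [NormedAddCommGroup W] [InnerProductSpace 𝕜 W] [CompleteSpace W]
    [NormedAddCommGroup H] [InnerProductSpace 𝕜 H] [CompleteSpace H]
    (B₀ B₁ : W →L[𝕜] H)
    (hker : LinearMap.ker (B₀ : W →ₗ[𝕜] H) ⊔ LinearMap.ker (B₁ : W →ₗ[𝕜] H) = ⊤)
    (hr₀ : IsClosed (LinearMap.range (B₀ : W →ₗ[𝕜] H) : Set H))
    (hr₁ : IsClosed (LinearMap.range (B₁ : W →ₗ[𝕜] H) : Set H))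
    (Φ Ψ : H →ₗ[𝕜] H)
    (hΦcontr : ∀ w : W, ‖Φ (B₀ w)‖ ≤ ‖B₀ w‖)
    (hΦrange : ∀ w : W, Φ (B₀ w) ∈ LinearMap.range (B₁ : W →ₗ[𝕜] H))
    (hΨrange : ∀ w : W, Ψ (B₁ w) ∈ LinearMap.range (B₀ : W →ₗ[𝕜] H))
    (hadj : ∀ v w : W, (inner 𝕜 (Φ (B₀ v)) (B₁ w) : 𝕜) = inner 𝕜 (B₀ v) (Ψ (B₁ w))) :
    ({u : W | ∀ z : W, B₁ z = Φ (B₀ z) →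
        (inner 𝕜 (B₁ z) (B₁ u) : 𝕜) - inner 𝕜 (B₀ z) (B₀ u) = 0} =
      {w : W | B₀ w = Ψ (B₁ w)}) ∧
    ({u : W | ∀ z : W, B₀ z = Ψ (B₁ z) →
        (inner 𝕜 (B₁ z) (B₁ u) : 𝕜) - inner 𝕜 (B₀ z) (B₀ u) = 0} =
      {w : W | B₁ w = Φ (B₀ w)}) ∧
    (∀ Φ' : H →ₗ[𝕜] H, (∀ w : W, ‖Φ' (B₀ w)‖ ≤ ‖B₀ w‖) →
      (∀ w : W, Φ' (B₀ w) ∈ LinearMap.range (B₁ : W →ₗ[𝕜] H)) →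
      ({w : W | B₁ w = Φ (B₀ w)} = {w : W | B₁ w = Φ' (B₀ w)}) →
      ∀ w : W, Φ (B₀ w) = Φ' (B₀ w)) := by

  have hsurj : ∀ v w : W, ∃ z : W, B₀ z = B₀ v ∧ B₁ z = B₁ w := by
    intro v w
    have hv : v ∈ LinearMap.ker (B₀ : W →ₗ[𝕜] H) ⊔ LinearMap.ker (B₁ : W →ₗ[𝕜] H) := hker ▸ Submodule.mem_top
    have hw : w ∈ LinearMap.ker (B₀ : W →ₗ[𝕜] H) ⊔ LinearMap.ker (B₁ : W →ₗ[𝕜] H) := hker ▸ Submodule.mem_top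
    obtain ⟨k0, hk0, k1, hk1, hkv⟩ := Submodule.mem_sup.mp hv
    obtain ⟨m0, hm0, m1, hm1, hmw⟩ := Submodule.mem_sup.mp hw
    have hk0' : B₀ k0 = 0 := hk0
    have hk1' : B₁ k1 = 0 := hk1
    have hm0' : B₀ m0 = 0 := hm0
    have hm1' : B₁ m1 = 0 := hm1
    refine ⟨k1 + m0, ?_, ?_⟩
    · rw [← hkv]; simp [map_add, hk0', hm0']
    · rw [← hmw]; simp [map_add, hk1', hm1']
  refine ⟨?_, ?_, ?_⟩
  · ext u
    simp only [Set.mem_setOf_eq]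
    constructor
    · intro h
      obtain ⟨v₀, (hv₀ : B₀ v₀ = Ψ (B₁ u))⟩ := hΨrange u
      have key : ∀ v : W, (inner 𝕜 (B₀ v) (B₀ u - Ψ (B₁ u)) : 𝕜) = 0 := by
        intro v
        obtain ⟨w', (hw' : B₁ w' = Φ (B₀ v))⟩ := hΦrange v
        obtain ⟨z, hz0, hz1⟩ := hsurj v w'
        have hzZ : B₁ z = Φ (B₀ z) := by rw [hz1, hw', hz0]
        have hb := h z hzZ
        rw [hzZ, hadj, hz0, sub_eq_zero] at hb
        rw [inner_sub_right, hb, sub_self]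
      have hx : B₀ u - Ψ (B₁ u) = B₀ (u - v₀) := by rw [map_sub, hv₀]
      have := key (u - v₀)
      rw [← hx] at this
      exact sub_eq_zero.mp (inner_self_eq_zero.mp this)
    · intro h z hz
      rw [hz, hadj, ← h, sub_self]
  · ext u
    simp only [Set.mem_setOf_eq]
    constructor
    · intro h
      obtain ⟨w₀, (hw₀ : B₁ w₀ = Φ (B₀ u))⟩ := hΦrange u
      have key : ∀ w : W, (inner 𝕜 (B₁ w) (B₁ u - Φ (B₀ u)) : 𝕜) = 0 := by
        intro w
        obtain ⟨v₀, (hv₀ : B₀ v₀ = Ψ (B₁ w))⟩ := hΨrange w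
        obtain ⟨z, hz0, hz1⟩ := hsurj v₀ w
        have hzZ : B₀ z = Ψ (B₁ z) := by rw [hz1, hz0, hv₀]
        have hb := h z hzZ
        rw [sub_eq_zero, hz1, hzZ, hz1] at hb
        have hadj' : (inner 𝕜 (Ψ (B₁ w)) (B₀ u) : 𝕜) = inner 𝕜 (B₁ w) (Φ (B₀ u)) := by
          have := congrArg (starRingEnd 𝕜) (hadj u w)
          simpa [inner_conj_symm] using this.symm
        rw [inner_sub_right, hb, hadj', sub_self]
      have hx : B₁ u - Φ (B₀ u) = B₁ (u - w₀) := by rw [map_sub, hw₀]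
      have := key (u - w₀)
      rw [← hx] at this
      exact sub_eq_zero.mp (inner_self_eq_zero.mp this)
    · intro h z hz
      have hadj' : (inner 𝕜 (Ψ (B₁ z)) (B₀ u) : 𝕜) = inner 𝕜 (B₁ z) (Φ (B₀ u)) := by
        have := congrArg (starRingEnd 𝕜) (hadj u z)
        simpa [inner_conj_symm] using this.symm
      rw [hz, hadj', ← h, sub_self]
  · intro Φ' _ hΦ'range hZ w
    obtain ⟨w', (hw' : B₁ w' = Φ (B₀ w))⟩ := hΦrange w
    obtain ⟨z, hz0, hz1⟩ := hsurj w w'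
    have hzZ : B₁ z = Φ (B₀ z) := by rw [hz1, hw', hz0]
    have hz' : B₁ z = Φ' (B₀ z) := by
      have hmem : z ∈ {w : W | B₁ w = Φ (B₀ w)} := hzZ
      rw [hZ] at hmem
      exact hmem
    rw [← hz0, ← hzZ, hz']
end
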